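/- arXiv:1701.07980 — 8 statements merged into one kernel-verified Lean document; each statement's English description precedes it below -/
import Mathlib

section
/- Let K be a compact Lie group. Then the set of characters of K — that is, the set of functions K → ℂ of the form k ↦ tr(r(k)) for some continuous group homomorphism r : K → GL(V) with V a finite-dimensional complex vector space — is a discrete subspace of the space C(K,ℂ) of continuous complex-valued functions on K equipped with the compact-open topology: every character has a neighborhood in C(K,ℂ) containing no other character of K. -/
open scoped Manifold

noncomputable section Paper

/-- The conjugate `c_g ∘ φ` of a continuous homomorphism `φ` by a group element `g`. -/
def conjCMH {K G : Type*} [Group K] [TopologicalSpace K] [Group G]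
    [TopologicalSpace G] [IsTopologicalGroup G] (g : G) (φ : ContinuousMonoidHom K G) :
    ContinuousMonoidHom K G :=
  { toFun := fun k => g * φ k * g⁻¹
    map_one' := by simp
    map_mul' := fun a b => by
      show g * φ (a * b) * g⁻¹ = (g * φ a * g⁻¹) * (g * φ b * g⁻¹)
      rw [map_mul]; group
    continuous_toFun := (continuous_const.mul (map_continuous φ)).mul continuous_const }

/-- The relation on `hom(K,G)` generated by: lying in the same path-component, and being
conjugate. -/
def homRel {K G : Type*} [Group K] [TopologicalSpace K] [Group G]
    [TopologicalSpace G] [IsTopologicalGroup G] (φ ψ : ContinuousMonoidHom K G) : Prop :=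
  Joined φ ψ ∨ ∃ g : G, ψ = conjCMH g φ

/-- `hom(K,G;ρ)`: the smallest subset of `hom(K,G)` containing `ρ` which is a union of
path-components and closed under conjugation, i.e. the equivalence class of `ρ` under the
equivalence relation generated by `homRel`. -/
def homClass {K G : Type*} [Group K] [TopologicalSpace K] [Group G]
    [TopologicalSpace G] [IsTopologicalGroup G] (ρ : ContinuousMonoidHom K G) :
    Set (ContinuousMonoidHom K G) :=
  {φ | Relation.EqvGen homRel ρ φ}

/-- `Aut(K)`: the group of homeomorphic group automorphisms of `K`, as a subgroup of `MulAut K`. -/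
def contAut (K : Type*) [Group K] [TopologicalSpace K] : Subgroup (MulAut K) where
  carrier := {e | Continuous e ∧ Continuous e.symm}
  one_mem' := ⟨continuous_id, continuous_id⟩
  mul_mem' := by
    intro a b ha hb
    refine ⟨?_, ?_⟩
    · have h : ⇑(a * b) = ⇑a ∘ ⇑b := rfl
      exact h ▸ ha.1.comp hb.1
    · have h : ⇑(a * b).symm = ⇑b.symm ∘ ⇑a.symm := rfl
      exact h ▸ hb.2.comp ha.2
  inv_mem' := by
    intro a ha
    exact ⟨ha.2, ha.1⟩

/-- Precomposition of a continuous homomorphism with a (continuous) automorphism. -/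
def precompCMH {K G : Type*} [Group K] [TopologicalSpace K] [Group G]
    [TopologicalSpace G] (φ : ContinuousMonoidHom K G) (μ : contAut K) :
    ContinuousMonoidHom K G :=
  ⟨φ.toMonoidHom.comp (μ : MulAut K).toMonoidHom, (map_continuous φ).comp μ.property.1⟩

theorem precompCMH_one {K G : Type*} [Group K] [TopologicalSpace K] [Group G]
    [TopologicalSpace G] (φ : ContinuousMonoidHom K G) : precompCMH φ 1 = φ := by
  ext k; rfl

theorem precompCMH_mul {K G : Type*} [Group K] [TopologicalSpace K] [Group G]
    [TopologicalSpace G] (φ : ContinuousMonoidHom K G) (μ ν : contAut K) :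
    precompCMH φ (μ * ν) = precompCMH (precompCMH φ μ) ν := by
  ext k; rfl

/-- The subgroup of `Aut(K)` of automorphisms `μ` whose right composition action preserves a
given subset `S` of a set `X` with a right `Aut(K)`-action `act`. -/
def monOf {K X : Type*} [Group K] [TopologicalSpace K]
    (act : X → contAut K → X) (hone : ∀ x, act x 1 = x)
    (hmul : ∀ x μ ν, act x (μ * ν) = act (act x μ) ν) (S : Set X) :
    Subgroup (contAut K) where
  carrier := {μ | (fun x => act x μ) '' S = S}
  one_mem' := by
    simp only [Set.mem_setOf_eq, hone, Set.image_id']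
  mul_mem' := by
    intro a b ha hb
    simp only [Set.mem_setOf_eq] at ha hb ⊢
    have key : (fun x => act x (a * b)) '' S = (fun x => act x b) '' ((fun x => act x a) '' S) := by
      rw [Set.image_image]
      exact Set.image_congr' fun x => (hmul x a b)
    rw [key, ha, hb]
  inv_mem' := by
    intro a ha
    simp only [Set.mem_setOf_eq] at ha ⊢
    conv_lhs => rw [← ha]
    rw [Set.image_image]
    have h1 : ∀ x, act (act x a) a⁻¹ = x := fun x => by
      rw [← hmul]; simp [hone]
    calc (fun x => act (act x a) a⁻¹) '' S = (fun x => x) '' S :=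
          Set.image_congr' h1
      _ = S := Set.image_id' S

/-- The monodromy group `Mon(G;ρ) ≤ Aut(K)`. -/
def Mon {K G : Type*} [Group K] [TopologicalSpace K] [Group G]
    [TopologicalSpace G] [IsTopologicalGroup G] (ρ : ContinuousMonoidHom K G) :
    Subgroup (contAut K) :=
  monOf precompCMH precompCMH_one precompCMH_mul (homClass ρ)

theorem mem_Mon_iff {K G : Type*} [Group K] [TopologicalSpace K] [Group G]
    [TopologicalSpace G] [IsTopologicalGroup G] (ρ : ContinuousMonoidHom K G) (μ : contAut K) :
    μ ∈ Mon ρ ↔ (fun φ => precompCMH φ μ) '' homClass ρ = homClass ρ :=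
  Iff.rfl

/-- `Inn(K)`: the subgroup of `Aut(K)` of inner automorphisms. -/
def innAut (K : Type*) [Group K] [TopologicalSpace K] : Subgroup (contAut K) where
  carrier := {μ | ∃ k : K, (μ : MulAut K) = MulAut.conj k}
  one_mem' := ⟨1, by simp⟩
  mul_mem' := by
    rintro a b ⟨k, hk⟩ ⟨l, hl⟩
    exact ⟨k * l, by rw [Subgroup.coe_mul, hk, hl, map_mul]⟩
  inv_mem' := by
    rintro a ⟨k, hk⟩
    exact ⟨k⁻¹, by
      rw [show ((a⁻¹ : contAut K) : MulAut K) = (a : MulAut K)⁻¹ from rfl, hk, map_inv]⟩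

/-- `χ : G → ℂ` is a character of `G`: the trace of some continuous finite-dimensional complex
representation of `G`. -/
def IsCharacter {G : Type*} [Group G] [TopologicalSpace G] (χ : G → ℂ) : Prop :=
  ∃ (n : ℕ) (r : G →* Matrix.GeneralLinearGroup (Fin n) ℂ),
    Continuous r ∧ ∀ g, χ g = Matrix.trace (r g : Matrix (Fin n) (Fin n) ℂ)

/-- `χ : G → ℂ` is a faithful character of `G`: the trace of some injective continuous
finite-dimensional complex representation of `G`. -/
def IsFaithfulCharacter {G : Type*} [Group G] [TopologicalSpace G] (χ : G → ℂ) : Prop :=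
  ∃ (n : ℕ) (r : G →* Matrix.GeneralLinearGroup (Fin n) ℂ),
    Continuous r ∧ Function.Injective r ∧ ∀ g, χ g = Matrix.trace (r g : Matrix (Fin n) (Fin n) ℂ)

/-- A topological (Lie) group is faithfully representable if it admits an injective continuous
homomorphism into `GL(V)` for some finite-dimensional complex vector space `V`. -/
def FaithfullyRepresentable (G : Type*) [Group G] [TopologicalSpace G] : Prop :=
  ∃ (n : ℕ) (r : G →* Matrix.GeneralLinearGroup (Fin n) ℂ),
    Continuous r ∧ Function.Injective r

/-- The space `P` encoding `hom(K, G⋉M)`: pairs `(φ, y)` with `φ ∈ hom(K,G)` and `y` a point of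
`M` fixed by `φ(K)`. -/
def actPairs (K G M : Type*) [Group K] [TopologicalSpace K] [Group G] [TopologicalSpace G]
    [SMul G M] : Set (ContinuousMonoidHom K G × M) :=
  {p | ∀ k : K, p.1 k • p.2 = p.2}

/-- The relation on `P = actPairs K G M` generated by: being joined by a path inside `P`, and
being related by the `G`-action `g • (φ, y) = (c_g ∘ φ, g • y)`. -/
def actRel {K G M : Type*} [Group K] [TopologicalSpace K] [Group G] [TopologicalSpace G]
    [IsTopologicalGroup G] [SMul G M] [TopologicalSpace M]
    (p q : ContinuousMonoidHom K G × M) : Prop :=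
  JoinedIn (actPairs K G M) p q ∨ ∃ g : G, q = (conjCMH g p.1, g • p.2)

/-- `P(σ,x) = hom(K, G⋉M; σ̄(x))`: the smallest subset of `P` containing `(σ,x)` which is a union
of path-components of `P` and invariant under the `G`-action. -/
def actClass {K G M : Type*} [Group K] [TopologicalSpace K] [Group G] [TopologicalSpace G]
    [IsTopologicalGroup G] [SMul G M] [TopologicalSpace M]
    (σ : ContinuousMonoidHom K G) (x : M) : Set (ContinuousMonoidHom K G × M) :=
  {p | Relation.EqvGen actRel (σ, x) p}

/-- The monodromy group `Mon(G⋉M; σ̄(x)) ≤ Aut(K)` of the action groupoid. -/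
def MonAct {K G M : Type*} [Group K] [TopologicalSpace K] [Group G] [TopologicalSpace G]
    [IsTopologicalGroup G] [SMul G M] [TopologicalSpace M]
    (σ : ContinuousMonoidHom K G) (x : M) : Subgroup (contAut K) :=
  monOf (fun p μ => (precompCMH p.1 μ, p.2)) (fun p => by simp [precompCMH_one])
    (fun p μ ν => by simp [precompCMH_mul]) (actClass σ x)

/-- The setoid on `G × A` identifying `(g, y)` with `(g⬝h, h⁻¹⬝y)` for `h` in a subgroup `H`. -/
def cosetSetoid {G M : Type*} [Group G] [MulAction G M] (H : Subgroup G) (A : Set M) :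
    Setoid (G × A) where
  r p q := ∃ h ∈ H, q.1 = p.1 * h ∧ (q.2 : M) = h⁻¹ • (p.2 : M)
  iseqv := by
    constructor
    · exact fun p => ⟨1, H.one_mem, by simp, by simp⟩
    · rintro p q ⟨h, hH, h1, h2⟩
      refine ⟨h⁻¹, H.inv_mem hH, ?_, ?_⟩
      · rw [h1]; group
      · rw [h2]; simp [smul_smul]
    · rintro p q s ⟨h, hH, h1, h2⟩ ⟨h', hH', h1', h2'⟩
      refine ⟨h * h', H.mul_mem hH hH', ?_, ?_⟩
      · rw [h1', h1]; group
      · rw [h2', h2]; simp [smul_smul, mul_inv_rev]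


/-- Postcomposition of a continuous homomorphism with a (continuous) automorphism. -/
def postCMH {K G : Type*} [Group K] [TopologicalSpace K] [Group G]
    [TopologicalSpace G] (ν : contAut G) (φ : ContinuousMonoidHom K G) :
    ContinuousMonoidHom K G :=
  ⟨(ν : MulAut G).toMonoidHom.comp φ.toMonoidHom, ν.property.1.comp (map_continuous φ)⟩

section CharAux

open MeasureTheory

open scoped Matrix.Norms.L2Operator

/-- Trace of an idempotent complex matrix is a natural number. -/
theorem trace_nat_of_idem {I : Type*} [Fintype I] [DecidableEq I]
    (P : Matrix I I ℂ) (hP : P * P = P) : ∃ m : ℕ, P.trace = m := by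
  have h : Matrix.toLin' P ∘ₗ Matrix.toLin' P = Matrix.toLin' P := by
    rw [← Matrix.toLin'_mul, hP]
  obtain ⟨p, hp⟩ := (LinearMap.isProj_iff_isIdempotentElem _).mpr h
  refine ⟨Module.finrank ℂ p, ?_⟩
  have ht := hp.trace
  rw [LinearMap.trace_eq_matrix_trace ℂ (Pi.basisFun ℂ I)] at ht
  rw [show LinearMap.toMatrix (Pi.basisFun ℂ I) (Pi.basisFun ℂ I) = LinearMap.toMatrix' from
    rfl] at ht
  rwa [LinearMap.toMatrix'_toLin'] at ht

/-- The Haar integral of the trace of a continuous multiplicative matrix-valued map on a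
compact group is a natural number. -/
theorem exists_nat_integral_trace {K : Type*} [Group K] [TopologicalSpace K]
    [IsTopologicalGroup K] [CompactSpace K] [MeasurableSpace K] [BorelSpace K]
    (μ : Measure K) [IsProbabilityMeasure μ] [μ.IsMulLeftInvariant]
    {I : Type*} [Fintype I] [DecidableEq I]
    (s : K → Matrix I I ℂ) (hc : Continuous s) (hm : ∀ g h, s (g * h) = s g * s h) :
    ∃ m : ℕ, ∫ g, (s g).trace ∂μ = m := by
  have hint : Integrable s μ :=
    hc.integrable_of_hasCompactSupport (HasCompactSupport.of_compactSpace s)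
  set P : Matrix I I ℂ := ∫ g, s g ∂μ with hPdef
  have hfix : ∀ g, s g * P = P := by
    intro g
    have h1 : s g * P = ∫ h, s g * s h ∂μ := by
      have := ((LinearMap.mulLeft ℂ (s g)).toContinuousLinearMap).integral_comp_comm hint
      simpa using this.symm
    rw [h1]
    have h2 : ∀ h : K, s g * s h = s (g * h) := fun h => (hm g h).symm
    simp_rw [h2]
    exact integral_mul_left_eq_self s g
  have hPP : P * P = P := by
    have h1 : P * P = ∫ g, s g * P ∂μ := by
      have := ((LinearMap.mulRight ℂ P).toContinuousLinearMap).integral_comp_comm hint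
      simpa using this.symm
    rw [h1]
    simp_rw [hfix]
    simp
  obtain ⟨m, hme⟩ := trace_nat_of_idem P hPP
  refine ⟨m, ?_⟩
  have h3 := ((Matrix.traceLinearMap I ℂ ℂ).toContinuousLinearMap).integral_comp_comm hint
  simpa [← hPdef, hme] using h3

open scoped Kronecker in
/-- Orthogonality-type pairing: the Haar integral of `tr r₁ · conj (tr r₂)` is a natural
number, for continuous finite-dimensional representations. -/
theorem exists_nat_integral_pair {K : Type*} [Group K] [TopologicalSpace K]
    [IsTopologicalGroup K] [CompactSpace K] [MeasurableSpace K] [BorelSpace K]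
    (μ : Measure K) [IsProbabilityMeasure μ] [μ.IsMulLeftInvariant]
    {n₁ n₂ : ℕ} (r₁ : K →* Matrix.GeneralLinearGroup (Fin n₁) ℂ)
    (r₂ : K →* Matrix.GeneralLinearGroup (Fin n₂) ℂ)
    (hc₁ : Continuous r₁) (hc₂ : Continuous r₂) :
    ∃ m : ℕ, ∫ g, (r₁ g : Matrix (Fin n₁) (Fin n₁) ℂ).trace *
      (starRingEnd ℂ) (r₂ g : Matrix (Fin n₂) (Fin n₂) ℂ).trace ∂μ = m := by
  set s : K → Matrix (Fin n₁ × Fin n₂) (Fin n₁ × Fin n₂) ℂ := fun g =>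
    (r₁ g : Matrix (Fin n₁) (Fin n₁) ℂ) ⊗ₖ
      ((r₂ g : Matrix (Fin n₂) (Fin n₂) ℂ).map (starRingEnd ℂ)) with hs
  have hc₁' : Continuous fun g => (r₁ g : Matrix (Fin n₁) (Fin n₁) ℂ) :=
    Units.continuous_val.comp hc₁
  have hc₂' : Continuous fun g => (r₂ g : Matrix (Fin n₂) (Fin n₂) ℂ) :=
    Units.continuous_val.comp hc₂
  have hcs : Continuous s := by
    apply continuous_matrix
    rintro ⟨i, k⟩ ⟨j, l⟩
    simp only [hs, Matrix.kroneckerMap_apply, Matrix.map_apply]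
    exact (((continuous_apply j).comp ((continuous_apply i).comp hc₁')).mul
      (continuous_star.comp ((continuous_apply l).comp ((continuous_apply k).comp hc₂'))))
  have hms : ∀ g h, s (g * h) = s g * s h := by
    intro g h
    simp only [hs, map_mul, Units.val_mul, Matrix.map_mul, Matrix.mul_kronecker_mul]
  obtain ⟨m, hm⟩ := exists_nat_integral_trace μ s hcs hms
  refine ⟨m, ?_⟩
  rw [← hm]
  congr 1
  ext g
  rw [hs]
  rw [Matrix.trace_kronecker]
  congr 1
  simp [Matrix.trace, Matrix.map_apply, map_sum]

end CharAux

/-- characters of a compact Lie group form a discrete subspace of `C(K,ℂ)`. -/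
theorem characters_discrete {dK : ℕ} {K : Type*} [TopologicalSpace K] [T2Space K]
    [ChartedSpace (EuclideanSpace ℝ (Fin dK)) K] [Group K] [IsTopologicalGroup K]
    [LieGroup (𝓡 dK) (⊤ : ℕ∞) K] [CompactSpace K]
    (χ : C(K, ℂ)) (hχ : IsCharacter (χ : K → ℂ)) :
    ∃ U : Set C(K, ℂ), IsOpen U ∧ χ ∈ U ∧
      ∀ χ' ∈ U, IsCharacter ((χ' : C(K, ℂ)) : K → ℂ) → χ' = χ := by
  open MeasureTheory in
  borelize K
  haveI : Nonempty K := ⟨1⟩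
  set μ : Measure K := Measure.haarMeasure (⊤ : TopologicalSpace.PositiveCompacts K) with hμ
  haveI : IsProbabilityMeasure μ := ⟨by
    rw [hμ, ← TopologicalSpace.PositiveCompacts.coe_top (α := K)]
    exact Measure.haarMeasure_self⟩
  haveI : μ.IsOpenPosMeasure := by
    apply isOpenPosMeasure_of_mulLeftInvariant_of_compact Set.univ isCompact_univ
    simp [measure_univ]
  refine ⟨Metric.ball χ 1, Metric.isOpen_ball, Metric.mem_ball_self one_pos, ?_⟩
  intro χ' hball hchar
  by_contra hne
  obtain ⟨n₁, r₁, hc₁, he₁⟩ := hχ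
  obtain ⟨n₂, r₂, hc₂, he₂⟩ := hchar
  -- integrability of all continuous functions
  have hint : ∀ f : K → ℂ, Continuous f → Integrable f μ := fun f hf =>
    hf.integrable_of_hasCompactSupport (HasCompactSupport.of_compactSpace f)
  have hct : ∀ {n : ℕ} (r : K →* Matrix.GeneralLinearGroup (Fin n) ℂ), Continuous r →
      Continuous fun g => (r g : Matrix (Fin n) (Fin n) ℂ).trace := by
    intro n r hr
    exact (Matrix.traceLinearMap (Fin n) ℂ ℂ).toContinuousLinearMap.continuous.comp
      (Units.continuous_val.comp hr)
  have hct₁ : Continuous fun g => (r₁ g : Matrix (Fin n₁) (Fin n₁) ℂ).trace := hct r₁ hc₁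
  have hct₂ : Continuous fun g => (r₂ g : Matrix (Fin n₂) (Fin n₂) ℂ).trace := hct r₂ hc₂
  have hcd : Continuous fun g => χ g - χ' g := (map_continuous χ).sub (map_continuous χ')
  -- the four pairings
  obtain ⟨m₁₁, h₁₁⟩ := exists_nat_integral_pair μ r₁ r₁ hc₁ hc₁
  obtain ⟨m₁₂, h₁₂⟩ := exists_nat_integral_pair μ r₁ r₂ hc₁ hc₂
  obtain ⟨m₂₁, h₂₁⟩ := exists_nat_integral_pair μ r₂ r₁ hc₂ hc₁
  obtain ⟨m₂₂, h₂₂⟩ := exists_nat_integral_pair μ r₂ r₂ hc₂ hc₂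
  have hpair : ∀ (f₁ f₂ : K → ℂ), Continuous f₁ → Continuous f₂ →
      Integrable (fun g => f₁ g * (starRingEnd ℂ) (f₂ g)) μ := fun f₁ f₂ h1 h2 =>
    hint _ (h1.mul (continuous_star.comp h2))
  have hI₁₁ := hpair _ _ hct₁ hct₁
  have hI₁₂ := hpair _ _ hct₁ hct₂
  have hI₂₁ := hpair _ _ hct₂ hct₁
  have hI₂₂ := hpair _ _ hct₂ hct₂
  -- expand the integral of |χ - χ'|² into the four pairings
  have hexp : ∫ g, (χ g - χ' g) * (starRingEnd ℂ) (χ g - χ' g) ∂μ =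
      (((m₁₁ : ℂ) - m₁₂) - ((m₂₁ : ℂ) - m₂₂)) := by
    have e1 : (fun g => (χ g - χ' g) * (starRingEnd ℂ) (χ g - χ' g)) = fun g =>
        ((r₁ g : Matrix (Fin n₁) (Fin n₁) ℂ).trace *
            (starRingEnd ℂ) (r₁ g : Matrix (Fin n₁) (Fin n₁) ℂ).trace -
          (r₁ g : Matrix (Fin n₁) (Fin n₁) ℂ).trace *
            (starRingEnd ℂ) (r₂ g : Matrix (Fin n₂) (Fin n₂) ℂ).trace) -
        ((r₂ g : Matrix (Fin n₂) (Fin n₂) ℂ).trace *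
            (starRingEnd ℂ) (r₁ g : Matrix (Fin n₁) (Fin n₁) ℂ).trace -
          (r₂ g : Matrix (Fin n₂) (Fin n₂) ℂ).trace *
            (starRingEnd ℂ) (r₂ g : Matrix (Fin n₂) (Fin n₂) ℂ).trace) := by
      funext g
      rw [he₁ g, he₂ g]
      simp only [map_sub]
      ring
    rw [e1]
    have s1 := integral_sub (hI₁₁.sub hI₁₂) (hI₂₁.sub hI₂₂)
    have s2 := integral_sub hI₁₁ hI₁₂
    have s3 := integral_sub hI₂₁ hI₂₂
    simp only [Pi.sub_apply] at s1 s2 s3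
    rw [s1, s2, s3, h₁₁, h₁₂, h₂₁, h₂₂]
  -- identify with the real integral of normSq
  have hreal : ∫ g, (χ g - χ' g) * (starRingEnd ℂ) (χ g - χ' g) ∂μ =
      ((∫ g, Complex.normSq (χ g - χ' g) ∂μ : ℝ) : ℂ) := by
    simp_rw [Complex.mul_conj]
    exact integral_ofReal
  set z : ℤ := ((m₁₁ : ℤ) + m₂₂) - m₁₂ - m₂₁ with hz
  have hzeq : ∫ g, Complex.normSq (χ g - χ' g) ∂μ = (z : ℝ) := by
    have h5 : ((∫ g, Complex.normSq (χ g - χ' g) ∂μ : ℝ) : ℂ) = ((z : ℝ) : ℂ) := by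
      rw [← hreal, hexp, hz]; push_cast; ring
    exact_mod_cast h5
  -- positivity
  have hnsq_cont : Continuous fun g => Complex.normSq (χ g - χ' g) :=
    Complex.continuous_normSq.comp hcd
  have hpos : 0 < ∫ g, Complex.normSq (χ g - χ' g) ∂μ := by
    rw [integral_pos_iff_support_of_nonneg (fun g => Complex.normSq_nonneg _)
      (hnsq_cont.integrable_of_hasCompactSupport (HasCompactSupport.of_compactSpace _))]
    have hopen : IsOpen (Function.support fun g => Complex.normSq (χ g - χ' g)) := by
      rw [Function.support_eq_preimage]
      exact isOpen_compl_singleton.preimage hnsq_cont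
    obtain ⟨x, hx⟩ : ∃ x, χ x ≠ χ' x := by
      by_contra h
      push_neg at h
      exact hne (ContinuousMap.ext fun x => (h x).symm)
    refine hopen.measure_pos μ ⟨x, ?_⟩
    simp only [Function.mem_support, ne_eq, Complex.normSq_eq_zero, sub_eq_zero]
    exact hx
  -- hence the integral is at least 1
  have hge : (1 : ℝ) ≤ ∫ g, Complex.normSq (χ g - χ' g) ∂μ := by
    rw [hzeq] at hpos ⊢
    exact_mod_cast hpos
  -- upper bound by the sup distance squared
  have hle : ∫ g, Complex.normSq (χ g - χ' g) ∂μ ≤ dist χ' χ ^ 2 := by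
    have hb : ∀ g, Complex.normSq (χ g - χ' g) ≤ dist χ' χ ^ 2 := by
      intro g
      rw [Complex.normSq_eq_norm_sq]
      have habs : ‖χ g - χ' g‖ = dist (χ' g) (χ g) := by
        rw [Complex.dist_eq, show χ' g - χ g = -(χ g - χ' g) by ring, norm_neg]
      rw [habs]
      have := ContinuousMap.dist_apply_le_dist (f := χ') (g := χ) g
      exact pow_le_pow_left₀ dist_nonneg this 2
    calc ∫ g, Complex.normSq (χ g - χ' g) ∂μ
        ≤ ∫ _, dist χ' χ ^ 2 ∂μ := integral_mono
          (hnsq_cont.integrable_of_hasCompactSupport (HasCompactSupport.of_compactSpace _))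
          (integrable_const _) hb
      _ = dist χ' χ ^ 2 := by simp
  have hlt : dist χ' χ ^ 2 < 1 := by
    have h1 : dist χ' χ < 1 := hball
    calc dist χ' χ ^ 2 ≤ dist χ' χ ^ 1 :=
          pow_le_pow_of_le_one dist_nonneg h1.le (by norm_num)
      _ = dist χ' χ := pow_one _
      _ < 1 := h1
  linarith

end Paper
end

section
/- Let K be a compact Lie group, G a Lie group, τ : G → ℂ a character of G, and ρ ∈ hom(K,G). Then for every φ ∈ hom(K,G;ρ) and every k ∈ K one has τ(φ(k)) = τ(ρ(k)). -/
open scoped Manifold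

noncomputable section Paper

open MeasureTheory

section Aux

variable {K : Type*} [TopologicalSpace K] [Group K] [IsTopologicalGroup K]
  [CompactSpace K] [T2Space K]
variable {G : Type*} [TopologicalSpace G] [Group G] [IsTopologicalGroup G]

/-- Integration against a fixed continuous weight is continuous on `C(K, ℂ)`. -/
theorem cont_integral_weight [MeasurableSpace K] [BorelSpace K] (μ : Measure K)
    [IsFiniteMeasure μ] (w : K → ℂ) (hw : Continuous w) :
    Continuous fun f : C(K, ℂ) => ∫ x, f x * w x ∂μ := by
  set wc : C(K, ℂ) := ⟨w, hw⟩ with hwc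
  have hint : ∀ f : C(K, ℂ), Integrable (fun x => f x * w x) μ := fun f =>
    (f.continuous.mul hw).integrable_of_hasCompactSupport
      (HasCompactSupport.of_compactSpace _)
  refine (LipschitzWith.of_dist_le_mul (K := ⟨(μ Set.univ).toReal * ‖wc‖,
    mul_nonneg ENNReal.toReal_nonneg (norm_nonneg _)⟩) ?_).continuous
  intro f g
  rw [dist_eq_norm, ← integral_sub (hint f) (hint g)]
  have hb : ∀ x : K, ‖f x * w x - g x * w x‖ ≤ dist f g * ‖wc‖ := by
    intro x
    rw [← sub_mul, norm_mul]
    have h1 : ‖f x - g x‖ ≤ dist f g := by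
      rw [← dist_eq_norm]; exact ContinuousMap.dist_apply_le_dist x
    exact mul_le_mul h1 (ContinuousMap.norm_coe_le_norm wc x) (norm_nonneg _)
      dist_nonneg
  calc ‖∫ x, (f x * w x - g x * w x) ∂μ‖
      ≤ (dist f g * ‖wc‖) * (μ Set.univ).toReal :=
        norm_integral_le_of_norm_le_const (Filter.Eventually.of_forall hb)
    _ = ↑(⟨(μ Set.univ).toReal * ‖wc‖, mul_nonneg ENNReal.toReal_nonneg
          (norm_nonneg _)⟩ : NNReal) * dist f g := by push_cast; ring

/-- Local rigidity: near any `ψ₀`, all `ψ` have the same character function. -/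
theorem key_rigidity (n : ℕ) (r : G →* Matrix.GeneralLinearGroup (Fin n) ℂ)
    (hr : Continuous r) (ψ₀ : ContinuousMonoidHom K G) :
    ∃ W : Set (ContinuousMonoidHom K G), IsOpen W ∧ ψ₀ ∈ W ∧ ∀ ψ ∈ W, ∀ y : K,
      Matrix.trace (r (ψ y) : Matrix (Fin n) (Fin n) ℂ) =
      Matrix.trace (r (ψ₀ y) : Matrix (Fin n) (Fin n) ℂ) := by
  borelize K
  set μ : Measure K := Measure.haar with hμ
  haveI : μ.IsMulLeftInvariant := by rw [hμ]; infer_instance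
  haveI : IsFiniteMeasure μ := by rw [hμ]; infer_instance
  haveI : μ.IsOpenPosMeasure := by rw [hμ]; infer_instance
  set M' := Matrix (Fin n) (Fin n) ℂ with hM
  let Rm : ContinuousMonoidHom K G → K → M' := fun ψ x => (r (ψ x) : M')
  have hRm : ∀ ψ, Continuous (Rm ψ) :=
    fun ψ => Units.continuous_val.comp (hr.comp (map_continuous ψ))
  have hRmul : ∀ ψ (a b : K), Rm ψ (a * b) = Rm ψ a * Rm ψ b := by
    intro ψ a b
    simp only [Rm, map_mul, Units.val_mul]
  let V : K → M' := fun x => Rm ψ₀ x⁻¹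
  have hV : Continuous V := (hRm ψ₀).comp continuous_inv
  have hVmul : ∀ (y x : K), V (y⁻¹ * x) = V x * Rm ψ₀ y := by
    intro y x
    have h : (y⁻¹ * x)⁻¹ = x⁻¹ * y := by group
    show Rm ψ₀ (y⁻¹ * x)⁻¹ = Rm ψ₀ x⁻¹ * Rm ψ₀ y
    rw [h, hRmul]
  have hint : ∀ f : K → ℂ, Continuous f → Integrable f μ := fun f hf =>
    hf.integrable_of_hasCompactSupport (HasCompactSupport.of_compactSpace f)
  -- the averaged intertwiner
  let F : ContinuousMonoidHom K G → M' := fun ψ =>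
    Matrix.of fun i j => ∫ x, (Rm ψ x * V x) i j ∂μ
  have hentry : ∀ ψ (i j : Fin n), Continuous fun x => (Rm ψ x * V x) i j :=
    fun ψ i j => ((hRm ψ).matrix_mul hV).matrix_elem i j
  -- intertwining property
  have hFint : ∀ ψ (y : K), Rm ψ y * F ψ = F ψ * Rm ψ₀ y := by
    intro ψ y
    ext i j
    rw [Matrix.mul_apply, Matrix.mul_apply]
    calc
      ∑ k, Rm ψ y i k * F ψ k j
          = ∑ k, ∫ x, Rm ψ y i k * (Rm ψ x * V x) k j ∂μ := by
            refine Finset.sum_congr rfl fun k _ => ?_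
            rw [integral_const_mul]; rfl
      _ = ∫ x, ∑ k, Rm ψ y i k * (Rm ψ x * V x) k j ∂μ :=
            (integral_finset_sum _ fun k _ =>
              hint _ (continuous_const.mul (hentry ψ k j))).symm
      _ = ∫ x, (fun z => (Rm ψ z * V (y⁻¹ * z)) i j) (y * x) ∂μ := by
            refine integral_congr_ae (Filter.Eventually.of_forall fun x => ?_)
            show _ = (Rm ψ (y * x) * V (y⁻¹ * (y * x))) i j
            rw [inv_mul_cancel_left, hRmul ψ y x, mul_assoc, Matrix.mul_apply]
      _ = ∫ x, (Rm ψ x * V (y⁻¹ * x)) i j ∂μ :=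
            integral_mul_left_eq_self (μ := μ)
              (fun z => (Rm ψ z * V (y⁻¹ * z)) i j) y
      _ = ∫ x, ((Rm ψ x * V x) * Rm ψ₀ y) i j ∂μ := by
            refine integral_congr_ae (Filter.Eventually.of_forall fun x => ?_)
            show (Rm ψ x * V (y⁻¹ * x)) i j = (Rm ψ x * V x * Rm ψ₀ y) i j
            rw [hVmul y x, mul_assoc]
      _ = ∑ k, (∫ x, (Rm ψ x * V x) i k ∂μ) * Rm ψ₀ y k j := by
            rw [show (fun x => ((Rm ψ x * V x) * Rm ψ₀ y) i j)
                = fun x => ∑ k, (Rm ψ x * V x) i k * Rm ψ₀ y k j from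
              funext fun x => Matrix.mul_apply]
            rw [integral_finset_sum _ fun k _ =>
              hint (fun x => (Rm ψ x * V x) i k * Rm ψ₀ y k j) ((hentry ψ i k).mul continuous_const)]
            exact Finset.sum_congr rfl fun k _ => integral_mul_const _ _
      _ = ∑ k, F ψ i k * Rm ψ₀ y k j := rfl
  -- value at the base point
  have hF0 : F ψ₀ = (((μ Set.univ).toReal : ℂ)) • (1 : M') := by
    ext i j
    have h1 : ∀ x : K, Rm ψ₀ x * V x = 1 := by
      intro x
      show Rm ψ₀ x * Rm ψ₀ x⁻¹ = 1
      rw [← hRmul, mul_inv_cancel]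
      simp only [Rm, map_one, Units.val_one]
    show (∫ x, (Rm ψ₀ x * V x) i j ∂μ) = _
    simp only [h1]
    rw [integral_const, Matrix.smul_apply, Complex.real_smul, smul_eq_mul]
    rfl
  have hμpos : 0 < (μ Set.univ).toReal :=
    ENNReal.toReal_pos (IsOpen.measure_ne_zero μ isOpen_univ ⟨1, trivial⟩)
      (measure_ne_top μ _)
  -- continuity of F
  have hFcont : Continuous F := by
    apply continuous_matrix
    intro i j
    have hrw : ∀ ψ, F ψ i j = ∑ k, ∫ x, (Rm ψ x) i k * (V x) k j ∂μ := by
      intro ψ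
      show (∫ x, (Rm ψ x * V x) i j ∂μ) = _
      rw [show (fun x => (Rm ψ x * V x) i j)
          = fun x => ∑ k, (Rm ψ x) i k * (V x) k j from
        funext fun x => Matrix.mul_apply]
      exact integral_finset_sum _ fun k _ =>
        hint _ (((hRm ψ).matrix_elem i k).mul (hV.matrix_elem k j))
    rw [show (fun ψ => F ψ i j)
        = fun ψ => ∑ k, ∫ x, (Rm ψ x) i k * (V x) k j ∂μ from funext hrw]
    refine continuous_finset_sum _ fun k _ => ?_
    -- each summand factors through C(K, ℂ)
    let c1 : C(G, ℂ) := ⟨fun g => (r g : M') i k,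
      (Units.continuous_val.comp hr).matrix_elem i k⟩
    have hc : Continuous fun ψ : ContinuousMonoidHom K G =>
        c1.comp (ψ : C(K, G)) :=
      (ContinuousMap.continuous_postcomp c1).comp continuous_induced_dom
    exact (cont_integral_weight μ (fun x => (V x) k j) (hV.matrix_elem k j)).comp hc
  -- conclusion
  refine ⟨{ψ | (F ψ).det ≠ 0}, ?_, ?_, ?_⟩
  · exact isOpen_compl_singleton.preimage hFcont.matrix_det
  · show (F ψ₀).det ≠ 0
    rw [hF0, Matrix.det_smul, Matrix.det_one, mul_one]
    exact pow_ne_zero _ (by exact_mod_cast hμpos.ne')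
  · intro ψ hψ y
    have hu : IsUnit (F ψ).det := isUnit_iff_ne_zero.mpr hψ
    have h := hFint ψ y
    show (Rm ψ y).trace = (Rm ψ₀ y).trace
    calc (Rm ψ y).trace
        = (Rm ψ y * F ψ * (F ψ)⁻¹).trace := by
          rw [mul_assoc, Matrix.mul_nonsing_inv _ hu, mul_one]
      _ = ((F ψ)⁻¹ * (Rm ψ y * F ψ)).trace := Matrix.trace_mul_comm _ _
      _ = ((F ψ)⁻¹ * (F ψ * Rm ψ₀ y)).trace := by rw [h]
      _ = (Rm ψ₀ y).trace := by
          rw [← mul_assoc, Matrix.nonsing_inv_mul _ hu, one_mul]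


theorem joined_trace_eq (n : ℕ) (r : G →* Matrix.GeneralLinearGroup (Fin n) ℂ)
    (hr : Continuous r) {ψ₀ ψ₁ : ContinuousMonoidHom K G} (h : Joined ψ₀ ψ₁) :
    ∀ y : K, Matrix.trace (r (ψ₁ y) : Matrix (Fin n) (Fin n) ℂ) =
      Matrix.trace (r (ψ₀ y) : Matrix (Fin n) (Fin n) ℂ) := by
  obtain ⟨p⟩ := h
  set S : Set unitInterval :=
    {t | ∀ y : K, Matrix.trace (r (p t y) : Matrix (Fin n) (Fin n) ℂ) =
      Matrix.trace (r (ψ₀ y) : Matrix (Fin n) (Fin n) ℂ)} with hS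
  have hopen : IsOpen S := by
    rw [isOpen_iff_mem_nhds]
    intro t ht
    obtain ⟨W, hWo, hWm, hW⟩ := key_rigidity n r hr (p t)
    refine Filter.mem_of_superset (p.continuous.continuousAt.preimage_mem_nhds
      (hWo.mem_nhds hWm)) ?_
    intro t' ht'
    intro y
    rw [hW (p t') ht' y, ht y]
  have hclosed : IsClosed S := by
    rw [← isOpen_compl_iff, isOpen_iff_mem_nhds]
    intro t ht
    obtain ⟨W, hWo, hWm, hW⟩ := key_rigidity n r hr (p t)
    refine Filter.mem_of_superset (p.continuous.continuousAt.preimage_mem_nhds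
      (hWo.mem_nhds hWm)) ?_
    intro t' ht' ht'S
    exact ht fun y => by rw [← hW (p t') ht' y, ht'S y]
  have h0 : (0 : unitInterval) ∈ S := by
    intro y; rw [p.source]
  have : S = Set.univ := (isClopen_iff.mp ⟨hclosed, hopen⟩).resolve_left
    (Set.nonempty_iff_ne_empty.mp ⟨0, h0⟩)
  have h1 : (1 : unitInterval) ∈ S := this ▸ Set.mem_univ _
  intro y
  rw [← p.target]
  exact h1 y

end Aux

/-- a character of a Lie group `G` is constant on `hom(K,G;ρ)` evaluated at any
element of a compact Lie group `K`. -/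
theorem character_constant_on_homClass {dK : ℕ} {K : Type*} [TopologicalSpace K] [T2Space K]
    [ChartedSpace (EuclideanSpace ℝ (Fin dK)) K] [Group K] [IsTopologicalGroup K]
    [LieGroup (𝓡 dK) (⊤ : ℕ∞) K] [CompactSpace K]
    {dG : ℕ} {G : Type*} [TopologicalSpace G] [T2Space G]
    [ChartedSpace (EuclideanSpace ℝ (Fin dG)) G] [Group G] [IsTopologicalGroup G]
    [LieGroup (𝓡 dG) (⊤ : ℕ∞) G]
    (τ : G → ℂ) (hτ : IsCharacter τ) (ρ : ContinuousMonoidHom K G)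
    (φ : ContinuousMonoidHom K G) (hφ : φ ∈ homClass ρ) (k : K) :
    τ (φ k) = τ (ρ k) := by
  obtain ⟨n, r, hr, hτr⟩ := hτ
  have gen : ∀ a b : ContinuousMonoidHom K G, Relation.EqvGen homRel a b →
      ∀ y : K, τ (a y) = τ (b y) := by
    intro a b h
    induction h with
    | rel x y hxy =>
      intro z
      rcases hxy with hj | ⟨g, hg⟩
      · rw [hτr, hτr, joined_trace_eq n r hr hj z]
      · subst hg
        show τ (x z) = τ (g * x z * g⁻¹)
        rw [hτr, hτr, map_mul, map_mul, Units.val_mul, Units.val_mul, map_inv]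
        rw [Matrix.trace_mul_comm, ← mul_assoc, ← Units.val_mul, inv_mul_cancel,
          Units.val_one, one_mul]
    | refl x => intro z; rfl
    | symm x y _ ih => intro z; exact (ih z).symm
    | trans x y z _ _ ih1 ih2 => intro w; exact (ih1 w).trans (ih2 w)
  exact (gen ρ φ hφ k).symm

end Paper
end

section
/- Let G be a faithfully representable Lie group, K a compact Lie group, and ρ ∈ hom(K,G) an injective continuous homomorphism. Then every φ ∈ hom(K,G;ρ) is injective. -/
open scoped Manifold

noncomputable section Paper

open Complex in
lemma abs_exp_mul_I_sub_one_sq (a : ℝ) :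
    ‖Complex.exp (a * I) - 1‖ ^ 2 = 2 - 2 * Real.cos a := by
  rw [← Complex.normSq_eq_norm_sq, Complex.exp_mul_I]
  simp [Complex.normSq_apply, Complex.cos_ofReal_re, Complex.sin_ofReal_re]
  nlinarith [Real.sin_sq_add_cos_sq a]

lemma zpow_small_eq_one {z : ℂ} (hz : z ≠ 0)
    (h : ∀ m : ℤ, ‖z ^ m - 1‖ < 1/2) : z = 1 := by
  -- first |z| = 1
  have habs : ‖z‖ = 1 := by
    by_contra hne
    rcases lt_or_gt_of_ne hne with hlt | hgt
    · have h1 : (1:ℝ) < (‖z‖)⁻¹ := by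
        rw [lt_inv_comm₀] <;> simp [hlt, norm_pos_iff.mpr hz]
      obtain ⟨m, hm⟩ := pow_unbounded_of_one_lt (3/2 : ℝ) h1
      have := h (-m)
      have habs' : ‖z ^ (-m : ℤ)‖ = (‖z‖)⁻¹ ^ m := by
        rw [zpow_neg, zpow_natCast, norm_inv, norm_pow, inv_pow]
      have : (‖z‖)⁻¹ ^ m - 1 ≤ ‖z ^ (-m:ℤ) - 1‖ := by
        have := norm_sub_norm_le (z ^ (-m:ℤ)) 1
        rw [habs', norm_one] at this; exact this
      linarith [h (-m)]
    · obtain ⟨m, hm⟩ := pow_unbounded_of_one_lt (3/2 : ℝ) hgt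
      have habs' : ‖z ^ (m : ℤ)‖ = (‖z‖) ^ m := by
        rw [zpow_natCast, norm_pow]
      have : (‖z‖) ^ m - 1 ≤ ‖z ^ (m:ℤ) - 1‖ := by
        have := norm_sub_norm_le (z ^ (m:ℤ)) 1
        rw [habs', norm_one] at this; exact this
      linarith [h m]
  -- now the argument
  set t := Complex.arg z with ht
  by_cases ht0 : t = 0
  · have := Complex.norm_mul_exp_arg_mul_I z
    rw [habs, ← ht, ht0] at this
    simpa using this.symm
  · exfalso
    have hzexp : z = Complex.exp (t * Complex.I) := by
      have := Complex.norm_mul_exp_arg_mul_I z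
      rw [habs, ← ht] at this
      simpa using this.symm
    set a := |t| with ha
    have ha0 : 0 < a := abs_pos.mpr ht0
    have hapi : a ≤ Real.pi := Complex.abs_arg_le_pi z
    set m₀ : ℕ := ⌈(Real.pi/2)/a⌉₊ with hm₀
    have hm1 : Real.pi/2 ≤ m₀ * a := by
      rw [← div_le_iff₀ ha0] at *
      exact Nat.le_ceil _
    have hm2 : (m₀ : ℝ) * a < Real.pi/2 + a := by
      have h1 : (m₀ : ℝ) < (Real.pi/2)/a + 1 :=
        Nat.ceil_lt_add_one (by positivity)
      have := mul_lt_mul_of_pos_right h1 ha0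
      rwa [add_mul, div_mul_cancel₀ _ (ne_of_gt ha0), one_mul] at this
    have hcos : Real.cos (m₀ * a) ≤ 0 :=
      Real.cos_nonpos_of_pi_div_two_le_of_le hm1 (by linarith)
    set m : ℤ := if 0 ≤ t then (m₀ : ℤ) else -(m₀ : ℤ) with hm
    have hzm : z ^ m = Complex.exp ((m₀ * a : ℝ) * Complex.I) := by
      rw [hzexp, ← Complex.exp_int_mul]
      congr 1
      by_cases htpos : 0 ≤ t
      · rw [hm, if_pos htpos]
        have : a = t := abs_of_nonneg htpos
        push_cast [this]
        ring
      · rw [hm, if_neg htpos]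
        have : a = -t := abs_of_neg (lt_of_not_ge htpos)
        push_cast [this]
        ring
    have hsq : ‖z ^ m - 1‖ ^ 2 = 2 - 2 * Real.cos (m₀ * a) := by
      rw [hzm]
      exact abs_exp_mul_I_sub_one_sq _
    have hlt := h m
    nlinarith [norm_nonneg (z ^ m - 1)]

lemma mulVec_norm_bound {n : ℕ} {B : Matrix (Fin n) (Fin n) ℂ} {d : ℝ} (hd : 0 ≤ d)
    (hB : ∀ i j, ‖B i j‖ ≤ d) (v : Fin n → ℂ) :
    ‖B.mulVec v‖ ≤ n * d * ‖v‖ := by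
  have hnn : (0:ℝ) ≤ n * d * ‖v‖ := by positivity
  rw [pi_norm_le_iff_of_nonneg hnn]
  intro i
  calc ‖B.mulVec v i‖ = ‖∑ j, B i j * v j‖ := by
        simp [Matrix.mulVec, dotProduct]
    _ ≤ ∑ j, ‖B i j * v j‖ := norm_sum_le _ _
    _ ≤ ∑ _j : Fin n, d * ‖v‖ := by
        refine Finset.sum_le_sum fun j _ => ?_
        rw [norm_mul]
        exact mul_le_mul (hB i j) (norm_le_pi_norm v j) (norm_nonneg _) hd
    _ = n * d * ‖v‖ := by simp [mul_assoc]

lemma eig_pow {n : ℕ} (x : GL (Fin n) ℂ) (v : Fin n → ℂ) (z : ℂ)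
    (h : (x : Matrix (Fin n) (Fin n) ℂ).mulVec v = z • v) :
    ∀ m : ℕ, ((x ^ m : GL (Fin n) ℂ) : Matrix (Fin n) (Fin n) ℂ).mulVec v = z ^ m • v := by
  intro m
  induction m with
  | zero => simp [Matrix.one_mulVec]
  | succ m ih =>
    rw [pow_succ', Units.val_mul, ← Matrix.mulVec_mulVec, ih, Matrix.mulVec_smul, h,
      pow_succ', mul_smul]
    exact smul_comm _ _ _

lemma eig_inv {n : ℕ} (x : GL (Fin n) ℂ) (v : Fin n → ℂ) (z : ℂ) (hz : z ≠ 0)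
    (h : (x : Matrix (Fin n) (Fin n) ℂ).mulVec v = z • v) :
    ((x⁻¹ : GL (Fin n) ℂ) : Matrix (Fin n) (Fin n) ℂ).mulVec v = z⁻¹ • v := by
  have h2 : ((x⁻¹ : GL (Fin n) ℂ) : Matrix (Fin n) (Fin n) ℂ).mulVec
      ((x : Matrix (Fin n) (Fin n) ℂ).mulVec v) = v := by
    rw [Matrix.mulVec_mulVec, ← Units.val_mul, inv_mul_cancel, Units.val_one,
      Matrix.one_mulVec]
  rw [h, Matrix.mulVec_smul] at h2
  calc ((x⁻¹ : GL (Fin n) ℂ) : Matrix (Fin n) (Fin n) ℂ).mulVec v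
      = z⁻¹ • (z • ((x⁻¹ : GL (Fin n) ℂ) : Matrix (Fin n) (Fin n) ℂ).mulVec v) := by
        rw [smul_smul, inv_mul_cancel₀ hz, one_smul]
    _ = z⁻¹ • v := by rw [h2]

lemma eig_zpow {n : ℕ} (x : GL (Fin n) ℂ) (v : Fin n → ℂ) (z : ℂ) (hz : z ≠ 0)
    (h : (x : Matrix (Fin n) (Fin n) ℂ).mulVec v = z • v) :
    ∀ m : ℤ, ((x ^ m : GL (Fin n) ℂ) : Matrix (Fin n) (Fin n) ℂ).mulVec v = z ^ m • v := by
  intro m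
  cases m with
  | ofNat k =>
    rw [Int.ofNat_eq_coe, zpow_natCast, zpow_natCast]
    exact eig_pow x v z h k
  | negSucc k =>
    rw [zpow_negSucc, zpow_negSucc, ← inv_pow, ← inv_pow]
    exact eig_pow x⁻¹ v z⁻¹ (eig_inv x v z hz h) (k + 1)
open Polynomial in
lemma GL_nss (n : ℕ) : ∃ V : Set (GL (Fin n) ℂ),
    V ∈ nhds 1 ∧ ∀ x : GL (Fin n) ℂ, (∀ m : ℤ, x ^ m ∈ V) → x = 1 := by
  rcases Nat.eq_zero_or_pos n with rfl | hn
  · exact ⟨Set.univ, Filter.univ_mem, fun x _ => Units.ext (by ext i j; exact i.elim0)⟩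
  set d : ℝ := 1/(4*n) with hdd
  have hd : 0 < d := by positivity
  refine ⟨{x : GL (Fin n) ℂ | ∀ i j,
      ‖(x : Matrix (Fin n) (Fin n) ℂ) i j - (1 : Matrix (Fin n) (Fin n) ℂ) i j‖ < d}, ?_, ?_⟩
  · have hopen : IsOpen {x : GL (Fin n) ℂ | ∀ i j,
        ‖(x : Matrix (Fin n) (Fin n) ℂ) i j - (1 : Matrix (Fin n) (Fin n) ℂ) i j‖ < d} := by
      have : {x : GL (Fin n) ℂ | ∀ i j,
          ‖(x : Matrix (Fin n) (Fin n) ℂ) i j - (1 : Matrix (Fin n) (Fin n) ℂ) i j‖ < d} =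
          ⋂ i, ⋂ j, {x : GL (Fin n) ℂ |
          ‖(x : Matrix (Fin n) (Fin n) ℂ) i j - (1 : Matrix (Fin n) (Fin n) ℂ) i j‖ < d} := by
        ext x; simp [Set.mem_iInter]
      rw [this]
      refine isOpen_iInter_of_finite fun i => isOpen_iInter_of_finite fun j => ?_
      have hc : Continuous fun x : GL (Fin n) ℂ =>
          ‖(x : Matrix (Fin n) (Fin n) ℂ) i j - (1 : Matrix (Fin n) (Fin n) ℂ) i j‖ := by
        refine Continuous.norm (Continuous.sub ?_ continuous_const)
        exact (continuous_apply j).comp ((continuous_apply i).comp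
          (Units.continuous_val : Continuous ((↑) : GL (Fin n) ℂ → Matrix (Fin n) (Fin n) ℂ)))
      exact isOpen_lt hc continuous_const
    refine hopen.mem_nhds ?_
    intro i j
    simp [hd]
  · intro x hx
    -- entrywise bounds on powers
    have hxd : ∀ m : ℤ, ∀ i j,
        ‖((x ^ m : GL (Fin n) ℂ) : Matrix (Fin n) (Fin n) ℂ) i j -
          (1 : Matrix (Fin n) (Fin n) ℂ) i j‖ ≤ d := fun m i j => (hx m i j).le
    -- norm bound for B := x^m - 1 applied to a vector
    have hBv : ∀ (m : ℤ) (v : Fin n → ℂ),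
        ‖(((x ^ m : GL (Fin n) ℂ) : Matrix (Fin n) (Fin n) ℂ) -
          (1 : Matrix (Fin n) (Fin n) ℂ)).mulVec v‖ ≤ n * d * ‖v‖ := by
      intro m v
      refine mulVec_norm_bound hd.le (fun i j => ?_) v
      simpa [Matrix.sub_apply] using hxd m i j
    have hnd : (n : ℝ) * d = 1/4 := by
      have : (n:ℝ) ≠ 0 := Nat.cast_ne_zero.mpr hn.ne'
      rw [hdd]
      field_simp
    -- Step 1 : every eigenvalue is 1
    have heig : ∀ (z : ℂ) (v : Fin n → ℂ), v ≠ 0 → (x : Matrix (Fin n) (Fin n) ℂ).mulVec v = z • v → z = 1 := by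
      intro z v hv hAv
      have hz : z ≠ 0 := by
        rintro rfl
        apply hv
        have h2 : ((x⁻¹ : GL (Fin n) ℂ) : Matrix (Fin n) (Fin n) ℂ).mulVec
            ((x : Matrix (Fin n) (Fin n) ℂ).mulVec v) = v := by
          rw [Matrix.mulVec_mulVec, ← Units.val_mul, inv_mul_cancel, Units.val_one,
            Matrix.one_mulVec]
        rw [hAv, zero_smul, Matrix.mulVec_zero] at h2
        exact h2.symm
      have hvn : (0:ℝ) < ‖v‖ := norm_pos_iff.mpr hv
      refine zpow_small_eq_one hz fun m => ?_
      have h1 : (((x ^ m : GL (Fin n) ℂ) : Matrix (Fin n) (Fin n) ℂ) -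
          (1 : Matrix (Fin n) (Fin n) ℂ)).mulVec v = (z ^ m - 1) • v := by
        rw [Matrix.sub_mulVec, Matrix.one_mulVec, eig_zpow x v z hz hAv m, sub_smul, one_smul]
      have h2 := hBv m v
      rw [h1, norm_smul] at h2
      have h3 : ‖z ^ m - 1‖ ≤ n * d := le_of_mul_le_mul_right (by linarith [h2]) hvn
      rw [hnd] at h3
      linarith
    -- Step 2: (A - 1) ^ k = 0 for some k ≥ 1
    haveI : Nontrivial (Fin n → ℂ) := by
      refine ⟨Pi.single ⟨0, hn⟩ 1, 0, fun h => ?_⟩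
      have := congrFun h ⟨0, hn⟩
      simp [Pi.single_eq_same] at this
    set f : Module.End ℂ (Fin n → ℂ) :=
      Matrix.toLinAlgEquiv' (x : Matrix (Fin n) (Fin n) ℂ) with hf
    have hint : IsIntegral ℂ f := Algebra.IsIntegral.isIntegral f
    have hmonic := minpoly.monic hint
    have hsplits : ((minpoly ℂ f)).Splits := IsAlgClosed.splits _
    have hroots : ∀ μ ∈ (minpoly ℂ f).roots, μ = 1 := by
      intro μ hμ
      have hisroot : (minpoly ℂ f).IsRoot μ := (Polynomial.mem_roots (by
        exact hmonic.ne_zero)).mp hμ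
      have heval : f.HasEigenvalue μ := (Module.End.hasEigenvalue_iff_isRoot).mpr hisroot
      obtain ⟨v, hv⟩ := heval.exists_hasEigenvector
      refine heig μ v hv.2 ?_
      have hfv : f v = μ • v := Module.End.mem_eigenspace_iff.mp hv.1
      rw [hf, Matrix.toLinAlgEquiv'_apply] at hfv
      exact hfv
    have hdeg : 0 < (minpoly ℂ f).natDegree := minpoly.natDegree_pos hint
    have hcard : (minpoly ℂ f).roots.card = (minpoly ℂ f).natDegree :=
      (Polynomial.splits_iff_card_roots.mp hsplits)
    have hprod : minpoly ℂ f = (X - C 1) ^ (minpoly ℂ f).natDegree := by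
      have h1 := Polynomial.Splits.eq_prod_roots_of_monic hsplits hmonic
      have h2 : (minpoly ℂ f).roots.map (fun a => X - C a) =
          Multiset.replicate (minpoly ℂ f).natDegree (X - C 1) := by
        rw [← hcard]
        refine Multiset.eq_replicate.mpr ⟨by simp, ?_⟩
        rintro b hb
        obtain ⟨a, ha, rfl⟩ := Multiset.mem_map.mp hb
        rw [hroots a ha]
      conv_lhs => rw [h1, h2, Multiset.prod_replicate]
    have haeval := minpoly.aeval ℂ f
    rw [hprod] at haeval
    have hfk : (f - 1) ^ (minpoly ℂ f).natDegree = 0 := by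
      rw [map_pow, map_sub, Polynomial.aeval_X, Polynomial.aeval_C, map_one] at haeval
      exact haeval
    have hNk : ((x : Matrix (Fin n) (Fin n) ℂ) - 1) ^ (minpoly ℂ f).natDegree = 0 := by
      apply (Matrix.toLinAlgEquiv' (R := ℂ) (n := Fin n)).injective
      rw [map_pow, map_sub, map_one, map_zero, ← hf]
      exact hfk
    -- Step 3: N = 0
    set k := (minpoly ℂ f).natDegree with hk
    set N : Matrix (Fin n) (Fin n) ℂ := (x : Matrix (Fin n) (Fin n) ℂ) - 1 with hN
    have hN0 : N = 0 := by
      by_contra hne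
      classical
      have hPex : ∃ i, N ^ (i + 1) = 0 := ⟨k - 1, by rwa [Nat.sub_add_cancel hdeg]⟩
      set j := Nat.find hPex with hj
      have hj1 : N ^ (j + 1) = 0 := Nat.find_spec hPex
      have hjpos : 0 < j := by
        rcases Nat.eq_zero_or_pos j with h0 | h
        · rw [h0, zero_add, pow_one] at hj1
          exact absurd hj1 hne
        · exact h
      have hNj : N ^ j ≠ 0 := by
        intro hzero
        have : N ^ ((j - 1) + 1) = 0 := by rwa [Nat.sub_add_cancel hjpos]
        exact absurd this (Nat.find_min hPex (by omega))
      -- get vector u with (N^j).mulVec u ≠ 0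
      have hgu : ∃ u, (N ^ j).mulVec u ≠ 0 := by
        by_contra hall
        push_neg at hall
        apply hNj
        apply (Matrix.toLinAlgEquiv' (R := ℂ) (n := Fin n)).injective
        rw [map_zero]
        refine LinearMap.ext fun u => ?_
        rw [Matrix.toLinAlgEquiv'_apply]
        simpa using hall u
      obtain ⟨u, hw0⟩ := hgu
      set w : Fin n → ℂ := (N ^ j).mulVec u with hwdef
      set pv : Fin n → ℂ := (N ^ (j - 1)).mulVec u with hpv
      have hNw : N.mulVec w = 0 := by
        rw [hwdef, Matrix.mulVec_mulVec, ← pow_succ', hj1, Matrix.zero_mulVec]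
      have hNp : N.mulVec pv = w := by
        rw [hpv, hwdef, Matrix.mulVec_mulVec, ← pow_succ', Nat.sub_add_cancel hjpos]
      have hxval : (x : Matrix (Fin n) (Fin n) ℂ) = N + 1 := by rw [hN]; abel
      have hAw : (x : Matrix (Fin n) (Fin n) ℂ).mulVec w = w := by
        rw [hxval, Matrix.add_mulVec, Matrix.one_mulVec, hNw, zero_add]
      have hAp : (x : Matrix (Fin n) (Fin n) ℂ).mulVec pv = pv + w := by
        rw [hxval, Matrix.add_mulVec, Matrix.one_mulVec, hNp, add_comm]
      have hm : ∀ m : ℕ, ((x ^ m : GL (Fin n) ℂ) : Matrix (Fin n) (Fin n) ℂ).mulVec pv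
          = pv + (m : ℂ) • w := by
        intro m
        induction m with
        | zero => simp [Matrix.one_mulVec]
        | succ m ih =>
          rw [pow_succ', Units.val_mul, ← Matrix.mulVec_mulVec, ih, Matrix.mulVec_add,
            Matrix.mulVec_smul, hAp, hAw]
          push_cast
          rw [add_smul, one_smul]
          abel
      obtain ⟨i, hwi⟩ : ∃ i, w i ≠ 0 := Function.ne_iff.mp hw0
      have hwin : (0:ℝ) < ‖w i‖ := norm_pos_iff.mpr hwi
      obtain ⟨m, hm'⟩ := exists_nat_gt ((n * d * ‖pv‖) / ‖w i‖)
      have hmw : (n * d * ‖pv‖) < m * ‖w i‖ := by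
        rw [div_lt_iff₀ hwin] at hm'
        linarith
      have hBp : (((x ^ (m:ℤ) : GL (Fin n) ℂ) : Matrix (Fin n) (Fin n) ℂ) -
          (1 : Matrix (Fin n) (Fin n) ℂ)).mulVec pv = (m : ℂ) • w := by
        rw [Matrix.sub_mulVec, Matrix.one_mulVec, zpow_natCast, hm m]
        abel
      have h2 := hBv (m : ℤ) pv
      rw [hBp] at h2
      have h3 : (m:ℝ) * ‖w i‖ ≤ ‖(m : ℂ) • w‖ := by
        rw [norm_smul]
        simp only [Complex.norm_natCast]
        exact mul_le_mul_of_nonneg_left (norm_le_pi_norm w i) (Nat.cast_nonneg m)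
      linarith
    -- conclude
    have : (x : Matrix (Fin n) (Fin n) ℂ) = 1 := by
      have := sub_eq_zero.mp hN0
      simpa [hN, sub_eq_zero] using hN0
    exact Units.ext (by rw [this, Units.val_one])

/-- A faithfully representable topological group has no small subgroups. -/
lemma FR_nss {G : Type*} [Group G] [TopologicalSpace G]
    (hG : ∃ (n : ℕ) (r : G →* Matrix.GeneralLinearGroup (Fin n) ℂ),
      Continuous r ∧ Function.Injective r) :
    ∃ V ∈ nhds (1 : G), ∀ x : G, (∀ m : ℤ, x ^ m ∈ V) → x = 1 := by
  obtain ⟨n, r, hcont, hinj⟩ := hG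
  obtain ⟨W, hW, hWs⟩ := GL_nss n
  refine ⟨r ⁻¹' W, ?_, ?_⟩
  · have : r 1 = 1 := map_one r
    exact hcont.continuousAt.preimage_mem_nhds (by rwa [this])
  · intro x hxm
    have : r x = 1 := hWs (r x) fun m => by
      rw [← map_zpow]
      exact hxm m
    exact hinj (by rw [this, map_one])

/-- Injectivity propagates along paths in `hom(K,G)` when `K` is compact and `G` has no
small subgroups. -/
lemma injective_of_joined_nss {K G : Type*} [Group K] [TopologicalSpace K]
    [IsTopologicalGroup K] [CompactSpace K] [T2Space K]
    [Group G] [TopologicalSpace G] [IsTopologicalGroup G] [T2Space G]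
    (hnss : ∃ V ∈ nhds (1 : G), ∀ x : G, (∀ m : ℤ, x ^ m ∈ V) → x = 1)
    {φ ψ : ContinuousMonoidHom K G} (h : Joined φ ψ)
    (hφ : Function.Injective φ) : Function.Injective ψ := by
  obtain ⟨V, hV, hVs⟩ := hnss
  set V₀ := interior V with hV₀
  have hV₀open : IsOpen V₀ := isOpen_interior
  have hV₀mem : (1 : G) ∈ V₀ := mem_interior_iff_mem_nhds.mpr hV
  have hV₀s : ∀ x : G, (∀ m : ℤ, x ^ m ∈ V₀) → x = 1 := fun x hx =>
    hVs x fun m => interior_subset (hx m)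
  rw [injective_iff_map_eq_one]
  intro k hk
  obtain ⟨γ⟩ := h
  set A : Set K := closure ((Subgroup.zpowers k : Subgroup K) : Set K) with hA
  have hAcomp : IsCompact A := isClosed_closure.isCompact
  -- key: given a `t` where the image of `A` lies in `V₀`, the homomorphism kills `A`
  have hker : ∀ t : unitInterval, (γ t) k = 1 → ∀ a ∈ A, (γ t) a = 1 := by
    intro t htk a ha
    have hclosed : IsClosed {a : K | (γ t) a = 1} :=
      isClosed_eq (map_continuous (γ t)) continuous_const
    refine closure_minimal ?_ hclosed ha
    rintro a ⟨m, rfl⟩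
    show (γ t) (k ^ m) = 1
    rw [map_zpow, htk, one_zpow]
  set T : Set unitInterval := {t | ∀ a ∈ A, (γ t) a = 1} with hT
  -- the path, as a continuous family of continuous maps
  have hu : Continuous fun t : unitInterval => (γ t).toContinuousMap :=
    (ContinuousMonoidHom.isInducing_toContinuousMap K G).continuous.comp γ.continuous
  have hTclosed : IsClosed T := by
    have : T = ⋂ a ∈ A, {t : unitInterval | (γ t) a = 1} := by
      ext t; simp [hT, Set.mem_iInter]
    rw [this]
    refine isClosed_biInter fun a _ => ?_
    exact isClosed_eq ((continuous_eval_const a).comp γ.continuous) continuous_const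
  have hTopen : IsOpen T := by
    rw [isOpen_iff_mem_nhds]
    intro t₀ ht₀
    have hWopen : IsOpen {f : C(K, G) | Set.MapsTo f A V₀} :=
      ContinuousMap.isOpen_setOf_mapsTo hAcomp hV₀open
    have hmem : (γ t₀).toContinuousMap ∈ {f : C(K, G) | Set.MapsTo f A V₀} := by
      intro a ha
      show (γ t₀) a ∈ V₀
      rw [ht₀ a ha]
      exact hV₀mem
    have hnhds : (fun t : unitInterval => (γ t).toContinuousMap) ⁻¹'
        {f : C(K, G) | Set.MapsTo f A V₀} ∈ nhds t₀ :=
      hu.continuousAt.preimage_mem_nhds (hWopen.mem_nhds hmem)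
    refine Filter.mem_of_superset hnhds ?_
    intro t ht
    have hmaps : Set.MapsTo (γ t) A V₀ := ht
    have htk : (γ t) k = 1 := by
      refine hV₀s ((γ t) k) fun m => ?_
      rw [← map_zpow]
      exact hmaps (subset_closure ⟨m, rfl⟩)
    exact hker t htk
  have hone : (1 : unitInterval) ∈ T := by
    intro a ha
    have : (γ 1) k = 1 := by rw [γ.target]; exact hk
    exact hker 1 this a ha
  have hTuniv : T = Set.univ :=
    (IsClopen.eq_univ ⟨hTclosed, hTopen⟩ ⟨1, hone⟩)
  have hzero : (0 : unitInterval) ∈ T := hTuniv ▸ Set.mem_univ _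
  have : φ k = 1 := by
    have := hzero k (subset_closure (Subgroup.mem_zpowers k))
    rwa [γ.source] at this
  exact (injective_iff_map_eq_one (φ : K →* G)).mp hφ k this

/-- in a faithfully representable Lie group, every member of `hom(K,G;ρ)` with
`ρ` injective is injective. -/
theorem injective_on_homClass {dK : ℕ} {K : Type*} [TopologicalSpace K] [T2Space K]
    [ChartedSpace (EuclideanSpace ℝ (Fin dK)) K] [Group K] [IsTopologicalGroup K]
    [LieGroup (𝓡 dK) (⊤ : ℕ∞) K] [CompactSpace K]
    {dG : ℕ} {G : Type*} [TopologicalSpace G] [T2Space G]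
    [ChartedSpace (EuclideanSpace ℝ (Fin dG)) G] [Group G] [IsTopologicalGroup G]
    [LieGroup (𝓡 dG) (⊤ : ℕ∞) G]
    (hG : FaithfullyRepresentable G)
    (ρ : ContinuousMonoidHom K G) (hρ : Function.Injective ρ)
    (φ : ContinuousMonoidHom K G) (hφ : φ ∈ homClass ρ) :
    Function.Injective φ := by
  have hnss := FR_nss hG
  have key : ∀ a b : ContinuousMonoidHom K G, Relation.EqvGen homRel a b →
      (Function.Injective a ↔ Function.Injective b) := by
    intro a b hab
    induction hab with
    | rel a b h =>
      rcases h with hj | ⟨g, rfl⟩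
      · exact ⟨fun ha => injective_of_joined_nss hnss hj ha,
          fun hb => injective_of_joined_nss hnss hj.symm hb⟩
      · constructor
        · intro ha k1 k2 hkk
          have h1 : g * a k1 * g⁻¹ = g * a k2 * g⁻¹ := hkk
          exact ha (mul_left_cancel (mul_right_cancel h1))
        · intro hb k1 k2 hkk
          refine hb ?_
          show g * a k1 * g⁻¹ = g * a k2 * g⁻¹
          rw [hkk]
    | refl a => exact Iff.rfl
    | symm a b _ ih => exact ih.symm
    | trans a b c _ _ ih1 ih2 => exact ih1.trans ih2
  exact (key ρ φ hφ).mp hρ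

end Paper
end

section
/- Let G be a faithfully representable Lie group, K a compact Lie group, and ρ ∈ hom(K,G) an injective continuous homomorphism. Then there exists a faithful character χ of K such that χ∘μ = χ for every μ ∈ Mon(G;ρ). -/
open scoped Manifold

noncomputable section Paper

section AuxProofs

open MeasureTheory Matrix

/-- A continuous `ℕ`-valued function on a preconnected space is constant. -/
lemma natval_const {X : Type*} [TopologicalSpace X] [PreconnectedSpace X]
    {f : X → ℂ} (hf : Continuous f) (hnat : ∀ x, ∃ m : ℕ, f x = m) (a b : X) :
    f a = f b := by
  have key : IsClopen {x | f x = f a} := by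
    constructor
    · exact isClosed_eq hf continuous_const
    · rw [isOpen_iff_mem_nhds]
      intro x hx
      have hb : {z : ℂ | ‖z - f x‖ < 1/2} ∈ nhds (f x) := by
        have : Metric.ball (f x) (1/2) ∈ nhds (f x) := Metric.ball_mem_nhds _ (by norm_num)
        rw [show {z : ℂ | ‖z - f x‖ < 1/2} = Metric.ball (f x) (1/2) from
          Set.ext fun z => by simp [Metric.mem_ball, dist_eq_norm]]
        exact this
      have hmem := (hf.continuousAt (x := x)).preimage_mem_nhds hb
      filter_upwards [hmem] with y hy
      obtain ⟨m, hm⟩ := hnat y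
      obtain ⟨mx, hmx⟩ := hnat x
      have hmm : m = mx := by
        by_contra hne
        have h1 : (1:ℝ) ≤ ‖(m:ℂ) - mx‖ := by
          have hcast : ((m:ℂ) - mx) = (((m:ℤ) - (mx:ℤ) : ℤ) : ℂ) := by push_cast; ring
          rw [hcast, Complex.norm_intCast]
          have : ((m:ℤ) - mx) ≠ 0 := sub_ne_zero.2 (by exact_mod_cast hne)
          exact_mod_cast Int.one_le_abs this
        have h2 : ‖f y - f x‖ < 1/2 := hy
        rw [hm, hmx] at h2
        linarith
      have : f y = f x := by rw [hm, hmx, hmm]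
      exact this.trans hx
  have huniv : {x | f x = f a} = Set.univ := key.eq_univ ⟨a, rfl⟩
  have : b ∈ {x | f x = f a} := huniv ▸ Set.mem_univ b
  exact this.symm

lemma multiset_sum_nat (s : Multiset ℂ) (h : ∀ x ∈ s, x = 0 ∨ x = 1) :
    ∃ m : ℕ, s.sum = m := by
  induction s using Multiset.induction_on with
  | empty => exact ⟨0, by simp⟩
  | cons a s ih =>
    obtain ⟨m, hm⟩ := ih (fun x hx => h x (Multiset.mem_cons_of_mem hx))
    rcases h a (Multiset.mem_cons_self a s) with ha | ha
    · exact ⟨m, by simp [ha, hm]⟩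
    · refine ⟨m + 1, ?_⟩
      rw [Multiset.sum_cons, ha, hm]
      push_cast
      ring

/-- The trace of an idempotent complex matrix is a natural number. -/
lemma idem_trace_nat {N : Type*} [Fintype N] [DecidableEq N] {P : Matrix N N ℂ}
    (hP : P * P = P) : ∃ m : ℕ, P.trace = m := by
  have htr : P.trace = P.charpoly.roots.sum := Matrix.trace_eq_sum_roots_charpoly (A := P)
  rw [htr]
  apply multiset_sum_nat
  intro x hx
  have hroot : P.charpoly.IsRoot x := Polynomial.isRoot_of_mem_roots hx
  have hdet : (x • (1 : Matrix N N ℂ) - P).det = 0 := by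
    have h0 : Polynomial.eval x P.charpoly = 0 := hroot
    rw [Matrix.charpoly, eval_det, Matrix.matPolyEquiv_charmatrix] at h0
    rw [Polynomial.eval_sub, Polynomial.eval_X, Polynomial.eval_C] at h0
    convert h0 using 2
    ext i j
    simp [Matrix.scalar_apply, Matrix.smul_apply, Matrix.one_apply, Matrix.diagonal]
  by_contra hcon
  push_neg at hcon
  obtain ⟨h0, h1⟩ := hcon
  have hx0 : x ≠ 0 := h0
  have hx1 : x - 1 ≠ 0 := sub_ne_zero.2 h1
  have hxx : x * (x - 1) ≠ 0 := mul_ne_zero hx0 hx1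
  have hinv : (x • (1 : Matrix N N ℂ) - P) *
      (x⁻¹ • (1 : Matrix N N ℂ) + (x * (x - 1))⁻¹ • P) = 1 := by
    have h2 : (x • (1 : Matrix N N ℂ) - P) * (x⁻¹ • 1 + (x * (x - 1))⁻¹ • P)
        = (x * x⁻¹) • (1 : Matrix N N ℂ)
          + (x * (x * (x - 1))⁻¹ - x⁻¹ - (x * (x - 1))⁻¹) • P := by
      simp only [sub_mul, mul_add, smul_mul_assoc, mul_smul_comm, one_mul, mul_one, hP]
      match_scalars <;> ring
    rw [h2, mul_inv_cancel₀ hx0, one_smul]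
    have hc0 : (x * (x * (x - 1))⁻¹ - x⁻¹ - (x * (x - 1))⁻¹) = 0 := by
      field_simp
      ring
    rw [hc0, zero_smul, add_zero]
  have := congrArg Matrix.det hinv
  rw [Matrix.det_mul, hdet, zero_mul, Matrix.det_one] at this
  exact zero_ne_one this


section PathRigidity

open MeasureTheory Matrix unitInterval
open scoped Kronecker

attribute [local instance] Matrix.normedAddCommGroup Matrix.normedSpace

lemma trace_const_of_path {K : Type*} [Group K] [TopologicalSpace K] [IsTopologicalGroup K]
    [CompactSpace K] [T2Space K] [MeasurableSpace K] [BorelSpace K]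
    {n : ℕ} (F : unitInterval → K → Matrix (Fin n) (Fin n) ℂ)
    (hcont : Continuous fun p : unitInterval × K => F p.1 p.2)
    (hmul : ∀ t x y, F t (x * y) = F t x * F t y) :
    ∀ k, (F 0 k).trace = (F 1 k).trace := by
  haveI : Nonempty K := ⟨1⟩
  set μ : Measure K := MeasureTheory.Measure.haarMeasure (⊤ : TopologicalSpace.PositiveCompacts K)
    with hμ
  haveI : IsProbabilityMeasure μ := ⟨by
    rw [← TopologicalSpace.PositiveCompacts.coe_top (α := K)]
    exact MeasureTheory.Measure.haarMeasure_self⟩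
  -- the two-parameter family of "kronecker with conjugate" homomorphisms
  set R : unitInterval × unitInterval → K → Matrix (Fin n × Fin n) (Fin n × Fin n) ℂ :=
    fun st x => (F st.1 x) ⊗ₖ ((F st.2 x).map (starRingEnd ℂ)) with hR
  have hRcont : Continuous fun p : (unitInterval × unitInterval) × K => R p.1 p.2 := by
    apply continuous_matrix
    rintro ⟨i, j⟩ ⟨k, l⟩
    simp only [hR, kroneckerMap_apply, Matrix.map_apply]
    have e1 : Continuous fun p : (unitInterval × unitInterval) × K => F p.1.1 p.2 :=
      hcont.comp ((continuous_fst.fst).prodMk continuous_snd)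
    have e2 : Continuous fun p : (unitInterval × unitInterval) × K => F p.1.2 p.2 :=
      hcont.comp ((continuous_fst.snd).prodMk continuous_snd)
    exact (e1.matrix_elem i k).mul ((e2.matrix_elem j l).star)
  have hRmul : ∀ st x y, R st (x * y) = R st x * R st y := by
    intro st x y
    simp only [hR, hmul, Matrix.map_mul, Matrix.mul_kronecker_mul]
  have hRc : ∀ st, Continuous (R st) :=
    fun st => hRcont.comp (continuous_const.prodMk continuous_id)
  have hRint : ∀ st, @Integrable _ UniformSpace.toTopologicalSpace
      SeminormedAddGroup.toContinuousENorm _ _ (R st) μ := by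
    intro st
    refine (hRc st).integrable_of_hasCompactSupport ?_
    exact IsCompact.of_isClosed_subset isCompact_univ (isClosed_tsupport _) (Set.subset_univ _)

  letI : CompleteSpace (Matrix (Fin n × Fin n) (Fin n × Fin n) ℂ) :=
    FiniteDimensional.complete ℂ _
  set P : unitInterval × unitInterval → Matrix (Fin n × Fin n) (Fin n × Fin n) ℂ :=
    fun st => ∫ x, R st x ∂μ with hPdef
  have step1 : ∀ st y, R st y * P st = P st := by
    intro st y
    let L := LinearMap.toContinuousLinearMap (LinearMap.mulLeft ℂ (R st y))
    have hL : ∀ A, L A = R st y * A := fun A => rfl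
    calc R st y * P st = L (∫ x, R st x ∂μ) := rfl
      _ = ∫ x, L (R st x) ∂μ := (L.integral_comp_comm (hRint st)).symm
      _ = ∫ x, R st (y * x) ∂μ := by simp only [hL, ← hRmul]
      _ = P st := integral_mul_left_eq_self (R st) y
  have step2 : ∀ st, P st * P st = P st := by
    intro st
    let L := LinearMap.toContinuousLinearMap (LinearMap.mulRight ℂ (P st))
    have hL : ∀ A, L A = A * P st := fun A => rfl
    calc P st * P st = L (∫ y, R st y ∂μ) := rfl
      _ = ∫ y, L (R st y) ∂μ := (L.integral_comp_comm (hRint st)).symm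
      _ = ∫ y, P st ∂μ := by simp only [hL, step1]
      _ = P st := by simp
  set T : unitInterval × K → ℂ := fun p => (F p.1 p.2).trace with hT
  have hTcont : Continuous T := hcont.matrix_trace
  set Jf : unitInterval × unitInterval → K → ℂ :=
    fun st x => T (st.1, x) * starRingEnd ℂ (T (st.2, x)) with hJf
  have htrR : ∀ st x, (R st x).trace = Jf st x := by
    intro st x
    simp only [hR, hJf, Matrix.trace_kronecker, hT]
    congr 1
    simp only [Matrix.trace, Matrix.diag, Matrix.map_apply, map_sum]
  have hJfc : ∀ st, Continuous (Jf st) := by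
    intro st
    exact ((hTcont.comp ((continuous_const).prodMk continuous_id)).mul
      ((hTcont.comp ((continuous_const).prodMk continuous_id)).star))
  have hJfint : ∀ st, Integrable (Jf st) μ := by
    intro st
    refine (hJfc st).integrable_of_hasCompactSupport ?_
    exact IsCompact.of_isClosed_subset isCompact_univ (isClosed_tsupport _) (Set.subset_univ _)
  set J : unitInterval × unitInterval → ℂ := fun st => ∫ x, Jf st x ∂μ with hJ
  have hJnat : ∀ st, ∃ m : ℕ, J st = m := by
    intro st
    obtain ⟨m, hm⟩ := idem_trace_nat (step2 st)
    refine ⟨m, ?_⟩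
    let L := LinearMap.toContinuousLinearMap
      (Matrix.traceLinearMap (Fin n × Fin n) ℂ ℂ)
    have hLP : ∀ A : Matrix (Fin n × Fin n) (Fin n × Fin n) ℂ, L A = A.trace := fun A => rfl
    have h1 : (P st).trace = ∫ x, (R st x).trace ∂μ := by
      calc (P st).trace = L (∫ x, R st x ∂μ) := rfl
        _ = ∫ x, L (R st x) ∂μ := (L.integral_comp_comm (hRint st)).symm
        _ = ∫ x, (R st x).trace ∂μ := by simp only [hLP]
    have h2 : J st = (P st).trace := by
      rw [hJ, h1]
      exact integral_congr_ae (Filter.Eventually.of_forall fun x => (htrR st x).symm)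
    rw [h2, hm]
  
  have hJfcontJ : Continuous fun q : (unitInterval × unitInterval) × K => Jf q.1 q.2 := by
    have e1 : Continuous fun q : (unitInterval × unitInterval) × K => T (q.1.1, q.2) :=
      hTcont.comp ((continuous_fst.fst).prodMk continuous_snd)
    have e2 : Continuous fun q : (unitInterval × unitInterval) × K => T (q.1.2, q.2) :=
      hTcont.comp ((continuous_fst.snd).prodMk continuous_snd)
    exact e1.mul e2.star
  obtain ⟨C, hC⟩ : ∃ C : ℝ, ∀ q : (unitInterval × unitInterval) × K, ‖Jf q.1 q.2‖ ≤ C := by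
    obtain ⟨C, hC⟩ := (isCompact_range hJfcontJ.norm).bddAbove
    exact ⟨C, fun q => hC (Set.mem_range_self q)⟩
  have hJcont : Continuous J := by
    rw [hJ]
    apply continuous_of_dominated (bound := fun _ => C)
    · exact fun st => (hJfc st).aestronglyMeasurable
    · exact fun st => Filter.Eventually.of_forall fun x => hC (st, x)
    · exact integrable_const C
    · exact Filter.Eventually.of_forall fun x =>
        hJfcontJ.comp (continuous_id.prodMk continuous_const)
  haveI : PreconnectedSpace unitInterval := Subtype.preconnectedSpace isPreconnected_Icc
  have hcst : ∀ st st' : unitInterval × unitInterval, J st = J st' :=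
    fun a b => natval_const hJcont hJnat a b
  have hdiffint : ∫ x, (T (1,x) - T (0,x)) * starRingEnd ℂ (T (1,x) - T (0,x)) ∂μ = 0 := by
    have expand : (fun x => (T (1,x) - T (0,x)) * starRingEnd ℂ (T (1,x) - T (0,x)))
        = fun x => Jf (1,1) x - Jf (1,0) x - Jf (0,1) x + Jf (0,0) x := by
      funext x
      simp only [hJf, map_sub]
      ring
    have i2 : Integrable (fun x => Jf (1,1) x - Jf (1,0) x) μ :=
      (hJfint (1,1)).sub (hJfint (1,0))
    have i4 : Integrable (fun x => Jf (1,1) x - Jf (1,0) x - Jf (0,1) x) μ :=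
      i2.sub (hJfint (0,1))
    rw [expand, integral_add i4 (hJfint (0,0)), integral_sub i2 (hJfint (0,1)),
      integral_sub (hJfint (1,1)) (hJfint (1,0))]
    show J (1,1) - J (1,0) - J (0,1) + J (0,0) = 0
    rw [hcst (1,1) (0,0), hcst (1,0) (0,0), hcst (0,1) (0,0)]
    ring
  have hsq : ∀ x, Complex.normSq (T (1,x) - T (0,x)) = 0 := by
    have hcast : (fun x => (T (1,x) - T (0,x)) * starRingEnd ℂ (T (1,x) - T (0,x)))
        = fun x => (RCLike.ofReal (Complex.normSq (T (1,x) - T (0,x))) : ℂ) := by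
      funext x
      exact Complex.mul_conj _
    rw [hcast, integral_ofReal] at hdiffint
    have h1 : ∫ x, Complex.normSq (T (1,x) - T (0,x)) ∂μ = 0 :=
      RCLike.ofReal_eq_zero.mp hdiffint
    have hTc1 : Continuous fun x : K => T (1, x) - T (0, x) :=
      (hTcont.comp (continuous_const.prodMk continuous_id)).sub
        (hTcont.comp (continuous_const.prodMk continuous_id))
    have hf_cont : Continuous fun x : K => Complex.normSq (T (1,x) - T (0,x)) :=
      Complex.continuous_normSq.comp hTc1
    have hf_int : Integrable (fun x : K => Complex.normSq (T (1,x) - T (0,x))) μ :=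
      hf_cont.integrable_of_hasCompactSupport
        (IsCompact.of_isClosed_subset isCompact_univ (isClosed_tsupport _) (Set.subset_univ _))
    have hae := (integral_eq_zero_iff_of_nonneg
      (fun x => Complex.normSq_nonneg _) hf_int).mp h1
    have heq := (hf_cont.ae_eq_iff_eq μ continuous_const).mp hae
    exact fun x => congrFun heq x
  intro k
  have hz := Complex.normSq_eq_zero.mp (hsq k)
  have : T (1, k) = T (0, k) := sub_eq_zero.mp hz
  exact this.symm


/-- Characters are invariant along the equivalence relation generated by paths and
conjugation. -/
lemma char_eq_of_eqvGen {K G : Type*} [Group K] [TopologicalSpace K] [IsTopologicalGroup K]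
    [CompactSpace K] [T2Space K] [MeasurableSpace K] [BorelSpace K] [LocallyCompactSpace K]
    [Group G] [TopologicalSpace G] [IsTopologicalGroup G]
    {n : ℕ} (r : G →* Matrix.GeneralLinearGroup (Fin n) ℂ) (hrc : Continuous r)
    {φ ψ : ContinuousMonoidHom K G} (h : Relation.EqvGen homRel φ ψ) :
    ∀ k, ((r (φ k) : Matrix (Fin n) (Fin n) ℂ)).trace
      = ((r (ψ k) : Matrix (Fin n) (Fin n) ℂ)).trace := by
  induction h with
  | rel a b hab =>
    rcases hab with hJ | ⟨g, rfl⟩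
    · let γ : Path a b := hJ.somePath
      have hγ : Continuous fun p : unitInterval × K => (γ p.1 : ContinuousMonoidHom K G) p.2 :=
        ((γ.continuous.comp continuous_fst).eval continuous_snd)
      have key := trace_const_of_path
        (fun t x => ((r ((γ t : ContinuousMonoidHom K G) x) : Matrix (Fin n) (Fin n) ℂ)))
        (by exact (Units.continuous_val.comp (hrc.comp hγ)))
        (by intro t x y; show ((r ((γ t) (x*y)) : Matrix (Fin n) (Fin n) ℂ)) = _; rw [_root_.map_mul (γ t), _root_.map_mul, Units.val_mul])
      intro k
      have h0 : (γ (0 : unitInterval) : ContinuousMonoidHom K G) = a := γ.source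
      have h1 : (γ (1 : unitInterval) : ContinuousMonoidHom K G) = b := γ.target
      have := key k
      simp only [h0, h1] at this
      exact this
    · intro k
      show ((r (a k) : Matrix (Fin n) (Fin n) ℂ)).trace
        = ((r (g * a k * g⁻¹) : Matrix (Fin n) (Fin n) ℂ)).trace
      rw [_root_.map_mul, _root_.map_mul, map_inv]
      rw [show ((r g * r (a k) * (r g)⁻¹ : Matrix.GeneralLinearGroup (Fin n) ℂ)
          : Matrix (Fin n) (Fin n) ℂ)
        = (r g : Matrix (Fin n) (Fin n) ℂ) * (r (a k) : Matrix (Fin n) (Fin n) ℂ)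
          * ((r g)⁻¹ : Matrix.GeneralLinearGroup (Fin n) ℂ) from rfl]
      rw [Matrix.trace_units_conj]
  | refl a => intro k; rfl
  | symm a b _ ih => intro k; exact (ih k).symm
  | trans a b c _ _ ih1 ih2 => intro k; exact (ih1 k).trans (ih2 k)

end PathRigidity

end AuxProofs

/-- obstruction to faithful representability via the monodromy group: there is a
faithful character of `K` invariant under all monodromy automorphisms. -/
theorem faithful_character_monodromy_invariant {dK : ℕ} {K : Type*} [TopologicalSpace K] [T2Space K]
    [ChartedSpace (EuclideanSpace ℝ (Fin dK)) K] [Group K] [IsTopologicalGroup K]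
    [LieGroup (𝓡 dK) (⊤ : ℕ∞) K] [CompactSpace K]
    {dG : ℕ} {G : Type*} [TopologicalSpace G] [T2Space G]
    [ChartedSpace (EuclideanSpace ℝ (Fin dG)) G] [Group G] [IsTopologicalGroup G]
    [LieGroup (𝓡 dG) (⊤ : ℕ∞) G]
    (hG : FaithfullyRepresentable G)
    (ρ : ContinuousMonoidHom K G) (hρ : Function.Injective ρ) :
    ∃ χ : K → ℂ, IsFaithfulCharacter χ ∧
      ∀ μ ∈ Mon ρ, ∀ k : K, χ ((μ : MulAut K) k) = χ k := by
  obtain ⟨n, r, hrc, hri⟩ := hG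
  letI : MeasurableSpace K := borel K
  haveI : BorelSpace K := ⟨rfl⟩
  refine ⟨fun k => ((r (ρ k) : Matrix (Fin n) (Fin n) ℂ)).trace, ?_, ?_⟩
  · refine ⟨n, r.comp ρ.toMonoidHom, ?_, ?_, fun k => rfl⟩
    · exact hrc.comp (map_continuous ρ)
    · exact hri.comp hρ
  · intro μA hμA k
    have hmem : precompCMH ρ μA ∈ homClass ρ := by
      have himg := (mem_Mon_iff ρ μA).mp hμA
      rw [← himg]
      exact ⟨ρ, Relation.EqvGen.refl ρ, rfl⟩
    exact (char_eq_of_eqvGen r hrc hmem k).symm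

end Paper
end

section
/- Let K be a locally compact Hausdorff topological group, G a topological group, and ρ ∈ hom(K,G). Then the group Inn(K) of inner automorphisms of K is a normal subgroup of the monodromy group Mon(G;ρ). -/
open scoped Manifold

noncomputable section Paper

theorem precompCMH_inn {K G : Type*} [Group K] [TopologicalSpace K] [Group G]
    [TopologicalSpace G] [IsTopologicalGroup G] (φ : ContinuousMonoidHom K G)
    {μ : contAut K} {k : K} (hk : (μ : MulAut K) = MulAut.conj k) :
    precompCMH φ μ = conjCMH (φ k) φ := by
  ext a
  show φ ((μ : MulAut K) a) = φ k * φ a * (φ k)⁻¹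
  rw [hk]
  simp [MulAut.conj, map_mul]

theorem homClass_image_inn_subset {K G : Type*} [Group K] [TopologicalSpace K] [Group G]
    [TopologicalSpace G] [IsTopologicalGroup G] (ρ : ContinuousMonoidHom K G)
    {μ : contAut K} (hμ : μ ∈ innAut K) :
    (fun φ => precompCMH φ μ) '' homClass ρ ⊆ homClass ρ := by
  rintro _ ⟨φ, hφ, rfl⟩
  obtain ⟨k, hk⟩ := hμ
  exact Relation.EqvGen.trans _ _ _ hφ
    (Relation.EqvGen.rel _ _ (Or.inr ⟨φ k, precompCMH_inn φ hk⟩))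

theorem innAut_le_Mon {K G : Type*} [Group K] [TopologicalSpace K] [Group G]
    [TopologicalSpace G] [IsTopologicalGroup G] (ρ : ContinuousMonoidHom K G) :
    innAut K ≤ Mon ρ := by
  intro μ hμ
  rw [mem_Mon_iff]
  apply le_antisymm (homClass_image_inn_subset ρ hμ)
  intro ψ hψ
  refine ⟨precompCMH ψ μ⁻¹, homClass_image_inn_subset ρ ((innAut K).inv_mem hμ) ⟨ψ, hψ, rfl⟩, ?_⟩
  show precompCMH (precompCMH ψ μ⁻¹) μ = ψ
  rw [← precompCMH_mul, inv_mul_cancel, precompCMH_one]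

/-- the inner automorphisms form a normal subgroup of the monodromy group. -/
theorem innAut_normal_in_Mon {K : Type*} [Group K] [TopologicalSpace K] [IsTopologicalGroup K]
    [LocallyCompactSpace K] [T2Space K]
    {G : Type*} [Group G] [TopologicalSpace G] [IsTopologicalGroup G]
    (ρ : ContinuousMonoidHom K G) :
    innAut K ≤ Mon ρ ∧ ((innAut K).subgroupOf (Mon ρ)).Normal := by
  refine ⟨innAut_le_Mon ρ, ?_⟩
  constructor
  intro n hn g
  rw [Subgroup.mem_subgroupOf] at hn ⊢
  obtain ⟨k, hk⟩ := hn
  refine ⟨(g : MulAut K) k, ?_⟩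
  ext a
  show (g : MulAut K) ((n : MulAut K) ((g : MulAut K)⁻¹ a)) = _
  rw [hk]
  simp [MulAut.conj, map_mul, map_inv]

end Paper
end

section
/- Let K and G be compact Lie groups, M a smooth manifold with a smooth left G-action, and σ ∈ hom(K,G). Let fix_{σ(K)}(M) = {y ∈ M : σ(k)·y = y for all k ∈ K} and let H = C_G(σ(K)) be the centralizer of σ(K) in G (note H maps fix_{σ(K)}(M) to itself). Give G × fix_{σ(K)}(M) the right H-action (g,y)·h = (gh, h⁻¹·y) and let Q be its quotient space with the quotient topology. Then the map (g,y) ↦ (c_g∘σ, g·y), where c_g(a) = gag⁻¹, descends to a homeomorphism from Q onto the subspace {(φ,y) ∈ P : φ = c_g∘σ for some g ∈ G} of P, and this homeomorphism is equivariant for the left G-actions, where G acts on Q by g'·[(g,y)] = [(g'g, y)]. -/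
open scoped Manifold

noncomputable section Paper

section AuxProof

open Topology

variable {K G : Type*} [Group K] [TopologicalSpace K]
  [Group G] [TopologicalSpace G] [IsTopologicalGroup G]

@[simp] lemma conjCMH_apply (g : G) (φ : ContinuousMonoidHom K G) (k : K) :
    conjCMH g φ k = g * φ k * g⁻¹ := rfl

lemma conjCMH_mul' (g g' : G) (φ : ContinuousMonoidHom K G) :
    conjCMH (g * g') φ = conjCMH g (conjCMH g' φ) := by
  ext k; simp only [conjCMH_apply]; group

lemma conjCMH_of_centralizer (σ : ContinuousMonoidHom K G) {h : G}
    (hh : h ∈ Subgroup.centralizer (Set.range (⇑σ : K → G))) : conjCMH h σ = σ := by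
  ext k
  have hk : σ k * h = h * σ k := Subgroup.mem_centralizer_iff.mp hh (σ k) ⟨k, rfl⟩
  simp only [conjCMH_apply]
  rw [show h * σ k = σ k * h from hk.symm]
  group

lemma conj_eq_centralizer (σ : ContinuousMonoidHom K G) {a b : G}
    (hab : conjCMH a σ = conjCMH b σ) :
    a⁻¹ * b ∈ Subgroup.centralizer (Set.range (⇑σ : K → G)) := by
  rw [Subgroup.mem_centralizer_iff]
  rintro x ⟨k, rfl⟩
  have h : a * σ k * a⁻¹ = b * σ k * b⁻¹ := by
    have := congrArg (fun ψ : ContinuousMonoidHom K G => ψ k) hab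
    simpa using this
  calc σ k * (a⁻¹ * b) = a⁻¹ * (a * σ k * a⁻¹) * b := by group
    _ = a⁻¹ * (b * σ k * b⁻¹) * b := by rw [h]
    _ = (a⁻¹ * b) * σ k := by group

lemma continuous_conjCMH (σ : ContinuousMonoidHom K G) :
    Continuous (fun g : G => conjCMH g σ) := by
  rw [(ContinuousMonoidHom.isInducing_toContinuousMap K G).continuous_iff]
  apply ContinuousMap.continuous_of_continuous_uncurry
  exact (continuous_fst.mul ((map_continuous σ).comp continuous_snd)).mul
    continuous_fst.inv

theorem orbit_aux {K G M : Type*} [Group K] [TopologicalSpace K]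
    [Group G] [TopologicalSpace G] [IsTopologicalGroup G] [T2Space G] [CompactSpace G]
    [TopologicalSpace M] [MulAction G M] [ContinuousSMul G M]
    (σ : ContinuousMonoidHom K G) :
    ∃ e : Quotient (cosetSetoid (Subgroup.centralizer (Set.range (⇑σ : K → G)))
          {y : M | ∀ k : K, σ k • y = y}) ≃ₜ
        {p : ContinuousMonoidHom K G × M // p ∈ actPairs K G M ∧ ∃ g : G, p.1 = conjCMH g σ},
      ∀ (g : G) (y : {y : M | ∀ k : K, σ k • y = y}),
          ((e (Quotient.mk _ (g, y)) : ContinuousMonoidHom K G × M)) =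
            (conjCMH g σ, g • (y : M)) := by
  classical
  set H : Subgroup G := Subgroup.centralizer (Set.range (⇑σ : K → G)) with hHdef
  set A : Set M := {y : M | ∀ k : K, σ k • y = y} with hAdef
  have hAmem : ∀ y : M, y ∈ A ↔ ∀ k : K, σ k • y = y := fun y => Iff.rfl
  have hAsm : ∀ h ∈ H, ∀ y ∈ A, h⁻¹ • y ∈ A := by
    intro h hh y hy k
    have hk : σ k * h⁻¹ = h⁻¹ * σ k :=
      Subgroup.mem_centralizer_iff.mp (H.inv_mem hh) (σ k) ⟨k, rfl⟩
    calc σ k • h⁻¹ • y = (σ k * h⁻¹) • y := (mul_smul _ _ _).symm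
      _ = (h⁻¹ * σ k) • y := by rw [hk]
      _ = h⁻¹ • σ k • y := mul_smul _ _ _
      _ = h⁻¹ • y := by rw [hy k]
  -- the forward map
  set T := {p : ContinuousMonoidHom K G × M // p ∈ actPairs K G M ∧ ∃ g : G, p.1 = conjCMH g σ}
    with hTdef
  have hmemf : ∀ x : G × A, (conjCMH x.1 σ, x.1 • (x.2 : M)) ∈ actPairs K G M ∧
      ∃ g : G, (conjCMH x.1 σ, x.1 • (x.2 : M)).1 = conjCMH g σ := by
    rintro ⟨g, y⟩
    refine ⟨fun k => ?_, ⟨g, rfl⟩⟩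
    show (conjCMH g σ) k • (g • (y : M)) = g • (y : M)
    rw [conjCMH_apply, mul_smul, mul_smul, inv_smul_smul, y.2 k]
  set f0 : G × A → T := fun x => ⟨(conjCMH x.1 σ, x.1 • (x.2 : M)), hmemf x⟩ with hf0def
  have hf0c : Continuous f0 :=
    Continuous.subtype_mk
      (((continuous_conjCMH σ).comp continuous_fst).prodMk
        (continuous_fst.smul (continuous_subtype_val.comp continuous_snd))) _
  have hresp : ∀ a b : G × A, (cosetSetoid H A).r a b → f0 a = f0 b := by
    rintro ⟨g, y⟩ ⟨g', y'⟩ ⟨h, hh, h1, h2⟩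
    apply Subtype.ext
    show (conjCMH g σ, g • (y : M)) = (conjCMH g' σ, g' • (y' : M))
    subst h1
    refine Prod.ext ?_ ?_
    · rw [conjCMH_mul', conjCMH_of_centralizer σ hh]
    · show g • (y : M) = (g * h) • (y' : M)
      rw [h2, mul_smul, smul_inv_smul]
  set fQ : Quotient (cosetSetoid H A) → T := Quotient.lift f0 hresp with hfQdef
  have hfQc : Continuous fQ := hf0c.quotient_lift hresp
  have hfQinj : Function.Injective fQ := by
    intro a b hab
    obtain ⟨x, rfl⟩ := Quotient.exists_rep a
    obtain ⟨y, rfl⟩ := Quotient.exists_rep b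
    have h1 : conjCMH x.1 σ = conjCMH y.1 σ :=
      congrArg (fun t : T => (t : ContinuousMonoidHom K G × M).1) hab
    have h2 : x.1 • (x.2 : M) = y.1 • (y.2 : M) :=
      congrArg (fun t : T => (t : ContinuousMonoidHom K G × M).2) hab
    apply Quotient.sound
    refine ⟨x.1⁻¹ * y.1, conj_eq_centralizer σ h1, ?_, ?_⟩
    · group
    · show (y.2 : M) = (x.1⁻¹ * y.1)⁻¹ • (x.2 : M)
      rw [mul_inv_rev, inv_inv, mul_smul, h2, inv_smul_smul]
  -- the orbit of σ is G/H
  set Or : Set (ContinuousMonoidHom K G) := Set.range (fun g : G => conjCMH g σ) with hOrdef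
  have hwd : ∀ a b : G, (QuotientGroup.leftRel H).r a b →
      (⟨conjCMH a σ, ⟨a, rfl⟩⟩ : Or) = ⟨conjCMH b σ, ⟨b, rfl⟩⟩ := by
    intro a b hab
    rw [QuotientGroup.leftRel_apply] at hab
    apply Subtype.ext
    show conjCMH a σ = conjCMH b σ
    have hb : b = a * (a⁻¹ * b) := by group
    rw [hb, conjCMH_mul', conjCMH_of_centralizer σ hab]
  set cbar : G ⧸ H → Or := Quotient.lift (fun g : G => (⟨conjCMH g σ, ⟨g, rfl⟩⟩ : Or)) hwd
    with hcbardef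
  have hcbarc : Continuous cbar :=
    (Continuous.subtype_mk (continuous_conjCMH σ) _).quotient_lift hwd
  have hcbar_inj : Function.Injective cbar := by
    intro a b hab
    obtain ⟨x, rfl⟩ := Quotient.exists_rep a
    obtain ⟨y, rfl⟩ := Quotient.exists_rep b
    have h1 : conjCMH x σ = conjCMH y σ := congrArg Subtype.val hab
    exact Quotient.sound (QuotientGroup.leftRel_apply.mpr (conj_eq_centralizer σ h1))
  have hcbar_surj : Function.Surjective cbar := by
    rintro ⟨ψ, g, rfl⟩
    exact ⟨⟦g⟧, rfl⟩
  set cEquiv : (G ⧸ H) ≃ Or := Equiv.ofBijective cbar ⟨hcbar_inj, hcbar_surj⟩ with hcEdef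
  have hcEc : Continuous (cEquiv : (G ⧸ H) → Or) := hcbarc
  set cHomeo : (G ⧸ H) ≃ₜ Or := Continuous.homeoOfEquivCompactToT2 hcEc with hcHdef
  have hcH_apply : ∀ q : G ⧸ H, cHomeo q = cbar q := fun q => rfl
  -- the candidate inverse
  have hjmem : ∀ p : T, (p : ContinuousMonoidHom K G × M).1 ∈ Or := by
    rintro ⟨p, hp, g, hg⟩
    exact ⟨g, hg.symm⟩
  set j : T → Or := fun p => ⟨(p : ContinuousMonoidHom K G × M).1, hjmem p⟩ with hjdef
  have hjc : Continuous j :=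
    Continuous.subtype_mk (continuous_fst.comp continuous_subtype_val) _
  set h' : T → G ⧸ H := fun p => cHomeo.symm (j p) with hh'def
  have hh'c : Continuous h' := cHomeo.symm.continuous.comp hjc
  have hkey : ∀ p : T, conjCMH ((h' p).out) σ = (p : ContinuousMonoidHom K G × M).1 := by
    intro p
    have h1 : cbar (h' p) = j p := by
      rw [← hcH_apply]
      exact cHomeo.apply_symm_apply (j p)
    have h2 : cbar ⟦(h' p).out⟧ = cbar (h' p) := by rw [Quotient.out_eq]
    exact congrArg Subtype.val (h2.trans h1)
  -- the quotient presentation of the target of π2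
  set π2 : G × M → (G ⧸ H) × M := fun x => (⟦x.1⟧, x.2) with hπ2def
  have hπ2c : Continuous π2 := (continuous_quotient_mk'.comp continuous_fst).prodMk
    continuous_snd
  have hπ2o : IsOpenMap π2 := IsOpenMap.prodMap QuotientGroup.isOpenMap_coe IsOpenMap.id
  set S : Set (G × M) := {x | x.1⁻¹ • x.2 ∈ A} with hSdef
  set R : Set ((G ⧸ H) × M) := π2 '' S with hRdef
  have hsub : ∀ z : G × M, π2 z ∈ R → z ∈ S := by
    · rintro ⟨g, m⟩ ⟨⟨g', m'⟩, hs, heq⟩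
      have e1 : (⟦g'⟧ : G ⧸ H) = ⟦g⟧ := congrArg Prod.fst heq
      have e2 : m' = m := congrArg Prod.snd heq
      have hhm : g'⁻¹ * g ∈ H := QuotientGroup.leftRel_apply.mp (Quotient.exact e1)
      have key : g⁻¹ • m = (g'⁻¹ * g)⁻¹ • (g'⁻¹ • m') := by
        rw [e2, mul_inv_rev, inv_inv, mul_smul, smul_inv_smul]
      show g⁻¹ • m ∈ A
      rw [key]
      exact hAsm _ hhm _ hs
  set r : ↥(π2 ⁻¹' R) → ↥R := R.restrictPreimage π2 with hrdef
  have hr_surj : Function.Surjective r := by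
    rintro ⟨z, hz⟩
    obtain ⟨s, hs, rfl⟩ := hz
    exact ⟨⟨s, show π2 s ∈ R from ⟨s, hs, rfl⟩⟩, rfl⟩
  have hrq : IsQuotientMap r :=
    IsOpenMap.isQuotientMap (hπ2o.restrictPreimage R) hπ2c.restrictPreimage hr_surj
  have hSmem : ∀ x : ↥(π2 ⁻¹' R), (x : G × M).1⁻¹ • (x : G × M).2 ∈ A :=
    fun x => hsub (x : G × M) x.2
  set FS : ↥(π2 ⁻¹' R) → Quotient (cosetSetoid H A) := fun x =>
    ⟦((x : G × M).1, ⟨(x : G × M).1⁻¹ • (x : G × M).2, hSmem x⟩)⟧ with hFSdef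
  have hFSc : Continuous FS := by
    apply continuous_quotient_mk'.comp
    exact (continuous_fst.comp continuous_subtype_val).prodMk
      (Continuous.subtype_mk
        ((continuous_fst.comp continuous_subtype_val).inv.smul
          (continuous_snd.comp continuous_subtype_val)) _)
  have hFSconst : ∀ x y : ↥(π2 ⁻¹' R), r x = r y → FS x = FS y := by
    intro x y hxy
    have hv : π2 (x : G × M) = π2 (y : G × M) := congrArg Subtype.val hxy
    have e1 : (⟦(x : G × M).1⟧ : G ⧸ H) = ⟦(y : G × M).1⟧ := congrArg Prod.fst hv
    have e2 : (x : G × M).2 = (y : G × M).2 := congrArg (fun t : (G ⧸ H) × M => t.2) hv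
    have hhm : (x : G × M).1⁻¹ * (y : G × M).1 ∈ H :=
      QuotientGroup.leftRel_apply.mp (Quotient.exact e1)
    apply Quotient.sound
    refine ⟨(x : G × M).1⁻¹ * (y : G × M).1, hhm, ?_, ?_⟩
    · group
    · show (y : G × M).1⁻¹ • (y : G × M).2 =
        ((x : G × M).1⁻¹ * (y : G × M).1)⁻¹ • ((x : G × M).1⁻¹ • (x : G × M).2)
      rw [← e2, mul_inv_rev, inv_inv, mul_smul, smul_inv_smul]
  set FR : ↥R → Quotient (cosetSetoid H A) := FS ∘ Function.surjInv hr_surj with hFRdef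
  have hFRr : ∀ x, FR (r x) = FS x := fun x =>
    hFSconst _ x (Function.surjInv_eq hr_surj (r x))
  have hFRc : Continuous FR := by
    rw [hrq.continuous_iff]
    exact (show (FR ∘ r) = FS from funext hFRr) ▸ hFSc
  -- the inverse map
  have hA0 : ∀ p : T, ((h' p).out)⁻¹ • (p : ContinuousMonoidHom K G × M).2 ∈ A := by
    intro p
    intro k
    have hc : conjCMH ((h' p).out) σ = (p : ContinuousMonoidHom K G × M).1 := hkey p
    have hp : (conjCMH ((h' p).out) σ) k • (p : ContinuousMonoidHom K G × M).2 =
        (p : ContinuousMonoidHom K G × M).2 := by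
      rw [hc]; exact p.2.1 k
    set g0 := (h' p).out
    set m := (p : ContinuousMonoidHom K G × M).2
    calc σ k • g0⁻¹ • m = (σ k * g0⁻¹) • m := (mul_smul _ _ _).symm
      _ = (g0⁻¹ * (g0 * σ k * g0⁻¹)) • m := by group
      _ = g0⁻¹ • ((g0 * σ k * g0⁻¹) • m) := mul_smul _ _ _
      _ = g0⁻¹ • m := by rw [show (g0 * σ k * g0⁻¹) • m = m from hp]
  have hmemT : ∀ p : T, ((h' p, (p : ContinuousMonoidHom K G × M).2) : (G ⧸ H) × M) ∈ R := by
    intro p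
    refine ⟨((h' p).out, (p : ContinuousMonoidHom K G × M).2), hA0 p, ?_⟩
    show ((⟦(h' p).out⟧ : G ⧸ H), (p : ContinuousMonoidHom K G × M).2) = _
    exact Prod.ext (Quotient.out_eq _) rfl
  set Ψ : T → Quotient (cosetSetoid H A) := fun p =>
    FR ⟨(h' p, (p : ContinuousMonoidHom K G × M).2), hmemT p⟩ with hΨdef
  have hΨc : Continuous Ψ :=
    hFRc.comp (Continuous.subtype_mk
      (hh'c.prodMk (continuous_snd.comp continuous_subtype_val)) _)
  have hFR_eval : ∀ (g : G) (m : M) (hm : ((⟦g⟧ : G ⧸ H), m) ∈ R) (hm2 : g⁻¹ • m ∈ A),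
      FR ⟨((⟦g⟧ : G ⧸ H), m), hm⟩ = ⟦(g, ⟨g⁻¹ • m, hm2⟩)⟧ := by
    intro g m hm hm2
    have hx : (g, m) ∈ π2 ⁻¹' R := by show π2 (g, m) ∈ R; exact hm
    have hrx : r ⟨(g, m), hx⟩ = ⟨((⟦g⟧ : G ⧸ H), m), hm⟩ := Subtype.ext rfl
    rw [← hrx, hFRr]
  have hright : ∀ p : T, fQ (Ψ p) = p := by
    intro p
    have hout : (((⟦(h' p).out⟧ : G ⧸ H), (p : ContinuousMonoidHom K G × M).2) :
        (G ⧸ H) × M) = (h' p, (p : ContinuousMonoidHom K G × M).2) :=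
      Prod.ext (Quotient.out_eq _) rfl
    have hmm : (((⟦(h' p).out⟧ : G ⧸ H), (p : ContinuousMonoidHom K G × M).2) :
        (G ⧸ H) × M) ∈ R := hout ▸ hmemT p
    have e0 : (⟨(h' p, (p : ContinuousMonoidHom K G × M).2), hmemT p⟩ : ↥R) =
        ⟨((⟦(h' p).out⟧ : G ⧸ H), (p : ContinuousMonoidHom K G × M).2), hmm⟩ :=
      Subtype.ext hout.symm
    have e1 : Ψ p = ⟦((h' p).out,
        ⟨((h' p).out)⁻¹ • (p : ContinuousMonoidHom K G × M).2, hA0 p⟩)⟧ := by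
      show FR ⟨(h' p, (p : ContinuousMonoidHom K G × M).2), hmemT p⟩ = _
      rw [e0, hFR_eval _ _ _ (hA0 p)]
    rw [e1]
    apply Subtype.ext
    show (conjCMH ((h' p).out) σ,
        ((h' p).out) • (((h' p).out)⁻¹ • (p : ContinuousMonoidHom K G × M).2)) = p.val
    rw [hkey p, smul_inv_smul]
  have hleft : ∀ q, Ψ (fQ q) = q := fun q => hfQinj (hright (fQ q))
  refine ⟨⟨⟨fQ, Ψ, hleft, hright⟩, hfQc, hΨc⟩, ?_⟩
  intro g y
  rfl

end AuxProof

/-- the `G`-orbit of the `σ`-part of `hom(K,G⋉M)` is `G ×_H fix_σ(K)(M)`,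
where `H = C_G(σ(K))`. -/
theorem orbit_part_homeo {dK : ℕ} {K : Type*} [TopologicalSpace K] [T2Space K]
    [ChartedSpace (EuclideanSpace ℝ (Fin dK)) K] [Group K] [IsTopologicalGroup K]
    [LieGroup (𝓡 dK) (⊤ : ℕ∞) K] [CompactSpace K]
    {dG : ℕ} {G : Type*} [TopologicalSpace G] [T2Space G]
    [ChartedSpace (EuclideanSpace ℝ (Fin dG)) G] [Group G] [IsTopologicalGroup G]
    [LieGroup (𝓡 dG) (⊤ : ℕ∞) G] [CompactSpace G]
    {dM : ℕ} {M : Type*} [TopologicalSpace M] [T2Space M]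
    [ChartedSpace (EuclideanSpace ℝ (Fin dM)) M] [IsManifold (𝓡 dM) (⊤ : ℕ∞) M]
    [MulAction G M]
    (hsm : ContMDiff ((𝓡 dG).prod (𝓡 dM)) (𝓡 dM) (⊤ : ℕ∞) (fun p : G × M => p.1 • p.2))
    (σ : ContinuousMonoidHom K G) :
    ∃ e : Quotient (cosetSetoid (Subgroup.centralizer (Set.range (⇑σ : K → G)))
          {y : M | ∀ k : K, σ k • y = y}) ≃ₜ
        {p : ContinuousMonoidHom K G × M // p ∈ actPairs K G M ∧ ∃ g : G, p.1 = conjCMH g σ},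
      (∀ (g : G) (y : {y : M | ∀ k : K, σ k • y = y}),
          ((e (Quotient.mk _ (g, y)) : ContinuousMonoidHom K G × M)) =
            (conjCMH g σ, g • (y : M))) ∧
      (∀ (g' g : G) (y : {y : M | ∀ k : K, σ k • y = y}),
          ((e (Quotient.mk _ (g' * g, y)) : ContinuousMonoidHom K G × M)) =
            (conjCMH g' ((e (Quotient.mk _ (g, y)) : ContinuousMonoidHom K G × M).1),
              g' • ((e (Quotient.mk _ (g, y)) : ContinuousMonoidHom K G × M).2))) := by
  have h1 : Continuous (fun p : G × M => p.1 • p.2) := hsm.continuous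
  haveI : ContinuousSMul G M := ⟨h1⟩
  obtain ⟨e, he⟩ := orbit_aux (M := M) σ
  refine ⟨e, he, ?_⟩
  intro g' g y
  rw [he, he]
  simp [conjCMH_mul', mul_smul]

end Paper
end

section
/- Let K and G be compact Lie groups, M a smooth manifold with a smooth left G-action, x ∈ M, and σ ∈ hom(K,G) with σ(K) contained in the stabilizer G_x = {g ∈ G : g·x = x}. Let σ_x ∈ hom(K, G_x) denote the corestriction of σ to G_x (a closed subgroup of G with the subspace topology). Then Mon(G_x; σ_x) ⊆ Mon(G⋉M; σ̄(x)) ⊆ Mon(G; σ) as subgroups of Aut(K). -/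
open scoped Manifold

noncomputable section Paper

section AuxMon

set_option linter.unusedSectionVars false

theorem eqvGen_map_rel {X Y : Type*} {R : X → X → Prop} {S : Y → Y → Prop} (F : X → Y)
    (h : ∀ a b, R a b → Relation.EqvGen S (F a) (F b)) {a b : X}
    (hab : Relation.EqvGen R a b) : Relation.EqvGen S (F a) (F b) := by
  induction hab with
  | rel a b hr => exact h a b hr
  | refl a => exact Relation.EqvGen.refl _
  | symm a b _ ih => exact Relation.EqvGen.symm _ _ ih
  | trans a b c _ _ ih1 ih2 => exact Relation.EqvGen.trans _ _ _ ih1 ih2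

/-- Membership in `monOf` of an `EqvGen`-class reduces to the class containing the translate of
the basepoint, provided the generating relation is compatible with the action. -/
theorem monOf_mem_iff_class {K X : Type*} [Group K] [TopologicalSpace K]
    (act : X → contAut K → X) (hone : ∀ x, act x 1 = x)
    (hmul : ∀ x μ ν, act x (μ * ν) = act (act x μ) ν)
    {R : X → X → Prop}
    (hR : ∀ (μ : contAut K) a b, R a b → Relation.EqvGen R (act a μ) (act b μ))
    (a : X) (μ : contAut K) :
    μ ∈ monOf act hone hmul {z | Relation.EqvGen R a z} ↔
      Relation.EqvGen R a (act a μ) := by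
  have hcancel : ∀ (ν : contAut K) (x : X), act (act x ν) ν⁻¹ = x := fun ν x => by
    rw [← hmul, mul_inv_cancel, hone]
  constructor
  · intro h
    have hmem : act a μ ∈ (fun x => act x μ) '' {z | Relation.EqvGen R a z} :=
      ⟨a, Relation.EqvGen.refl a, rfl⟩
    have himg : (fun x => act x μ) '' {z | Relation.EqvGen R a z} =
        {z | Relation.EqvGen R a z} := h
    rw [himg] at hmem
    exact hmem
  · intro h
    show (fun x => act x μ) '' {z | Relation.EqvGen R a z} = {z | Relation.EqvGen R a z}
    apply Set.eq_of_subset_of_subset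
    · rintro _ ⟨b, hb, rfl⟩
      exact Relation.EqvGen.trans _ _ _ h (eqvGen_map_rel (fun x => act x μ) (hR μ) hb)
    · intro b hb
      refine ⟨act b μ⁻¹, ?_, show act (act b μ⁻¹) μ = b by rw [← hmul, inv_mul_cancel, hone]⟩
      have h1 : Relation.EqvGen R (act a μ⁻¹) a := by
        have h1' : Relation.EqvGen R (act a μ⁻¹) (act (act a μ) μ⁻¹) :=
          eqvGen_map_rel (fun x => act x μ⁻¹) (hR μ⁻¹) h
        rwa [hcancel] at h1'
      have h2 := eqvGen_map_rel (fun x => act x μ⁻¹) (hR μ⁻¹) hb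
      exact Relation.EqvGen.trans _ _ _ (Relation.EqvGen.symm _ _ h1) h2

variable {K G : Type*} [Group K] [TopologicalSpace K] [Group G]
    [TopologicalSpace G] [IsTopologicalGroup G]

/-- The automorphism `μ ∈ Aut(K)` as a continuous monoid hom `K → K`. -/
def autCMH (μ : contAut K) : ContinuousMonoidHom K K :=
  ⟨(μ : MulAut K).toMonoidHom, μ.property.1⟩

theorem continuous_precompCMH (μ : contAut K) :
    Continuous (fun φ : ContinuousMonoidHom K G => precompCMH φ μ) := by
  have he : (fun φ : ContinuousMonoidHom K G => precompCMH φ μ) =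
      fun φ : ContinuousMonoidHom K G => φ.comp (autCMH μ) := by
    funext φ; ext k; rfl
  rw [he]
  exact ContinuousMonoidHom.continuous_comp_left _

theorem homRel_precomp (μ : contAut K) (φ ψ : ContinuousMonoidHom K G)
    (h : homRel φ ψ) : homRel (precompCMH φ μ) (precompCMH ψ μ) := by
  rcases h with h | ⟨g, rfl⟩
  · left
    obtain ⟨γ⟩ := h
    exact ⟨γ.map (continuous_precompCMH μ)⟩
  · right
    exact ⟨g, by ext k; rfl⟩

theorem actRel_precomp {M : Type*} [TopologicalSpace M] [MulAction G M]
    (μ : contAut K) (p q : ContinuousMonoidHom K G × M) (h : actRel p q) :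
    actRel (precompCMH p.1 μ, p.2) (precompCMH q.1 μ, q.2) := by
  rcases h with h | ⟨g, rfl⟩
  · left
    have hc : Continuous (fun r : ContinuousMonoidHom K G × M => (precompCMH r.1 μ, r.2)) :=
      ((continuous_precompCMH μ).comp continuous_fst).prodMk continuous_snd
    refine (h.map hc).mono ?_
    rintro _ ⟨r, hr, rfl⟩ k
    exact hr ((μ : MulAut K) k)
  · right
    refine ⟨g, Prod.ext ?_ rfl⟩
    ext k; rfl

/-- Corestriction inclusion: a continuous hom into a subgroup, viewed into the ambient group. -/
def extCMH {H : Subgroup G} (φ : ContinuousMonoidHom K H) : ContinuousMonoidHom K G :=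
  ⟨H.subtype.comp φ.toMonoidHom, continuous_subtype_val.comp (map_continuous φ)⟩

theorem continuous_extCMH {H : Subgroup G} :
    Continuous (fun φ : ContinuousMonoidHom K H => (extCMH φ : ContinuousMonoidHom K G)) := by
  have he : (fun φ : ContinuousMonoidHom K H => (extCMH φ : ContinuousMonoidHom K G)) =
      fun φ : ContinuousMonoidHom K H =>
        ContinuousMonoidHom.comp ⟨H.subtype, continuous_subtype_val⟩ φ := by
    funext φ; ext k; rfl
  rw [he]
  exact ContinuousMonoidHom.continuous_comp_right _

theorem homRel_ext {M : Type*} [TopologicalSpace M] [MulAction G M] (x : M)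
    (φ ψ : ContinuousMonoidHom K (MulAction.stabilizer G x)) (h : homRel φ ψ) :
    Relation.EqvGen actRel ((extCMH φ, x) : ContinuousMonoidHom K G × M) (extCMH ψ, x) := by
  rcases h with h | ⟨g, rfl⟩
  · apply Relation.EqvGen.rel
    left
    have hc : Continuous (fun ρ : ContinuousMonoidHom K (MulAction.stabilizer G x) =>
        ((extCMH ρ, x) : ContinuousMonoidHom K G × M)) :=
      continuous_extCMH.prodMk continuous_const
    obtain ⟨γ⟩ := h
    refine ⟨γ.map hc, fun t => ?_⟩
    intro k
    exact (γ t k).2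
  · apply Relation.EqvGen.rel
    right
    refine ⟨(g : G), Prod.ext ?_ ?_⟩
    · ext k
      show ((g * φ k * g⁻¹ : MulAction.stabilizer G x) : G) =
        (g : G) * (extCMH φ) k * (g : G)⁻¹
      push_cast
      rfl
    · exact (g.2 : (g : G) • x = x).symm

theorem actRel_fst {M : Type*} [TopologicalSpace M] [MulAction G M]
    (p q : ContinuousMonoidHom K G × M) (h : actRel p q) :
    Relation.EqvGen homRel p.1 q.1 := by
  rcases h with h | ⟨g, rfl⟩
  · apply Relation.EqvGen.rel
    left
    obtain ⟨γ⟩ := h.joined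
    exact ⟨γ.map continuous_fst⟩
  · exact Relation.EqvGen.rel _ _ (Or.inr ⟨g, rfl⟩)

end AuxMon

/-- `Mon(G_x;σ_x) ⊆ Mon(G⋉M;σ̄(x)) ⊆ Mon(G;σ)`. -/
theorem Mon_stabilizer_le_Mon_action_le_Mon {dK : ℕ} {K : Type*} [TopologicalSpace K] [T2Space K]
    [ChartedSpace (EuclideanSpace ℝ (Fin dK)) K] [Group K] [IsTopologicalGroup K]
    [LieGroup (𝓡 dK) ((⊤ : ℕ∞) : WithTop ℕ∞) K] [CompactSpace K]
    {dG : ℕ} {G : Type*} [TopologicalSpace G] [T2Space G]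
    [ChartedSpace (EuclideanSpace ℝ (Fin dG)) G] [Group G] [IsTopologicalGroup G]
    [LieGroup (𝓡 dG) ((⊤ : ℕ∞) : WithTop ℕ∞) G] [CompactSpace G]
    {dM : ℕ} {M : Type*} [TopologicalSpace M] [T2Space M]
    [ChartedSpace (EuclideanSpace ℝ (Fin dM)) M] [IsManifold (𝓡 dM) ((⊤ : ℕ∞) : WithTop ℕ∞) M]
    [MulAction G M]
    (hsm : ContMDiff ((𝓡 dG).prod (𝓡 dM)) (𝓡 dM) (⊤ : ℕ∞) (fun p : G × M => p.1 • p.2))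
    (σ : ContinuousMonoidHom K G) (x : M) (hx : ∀ k : K, σ k ∈ MulAction.stabilizer G x)
    (σx : ContinuousMonoidHom K (MulAction.stabilizer G x))
    (hσx : ∀ k : K, ((σx k : G)) = σ k) :
    Mon σx ≤ MonAct σ x ∧ MonAct σ x ≤ Mon σ := by
  have hRhom : ∀ {G' : Type _} [Group G'] [TopologicalSpace G'] [IsTopologicalGroup G']
      (μ : contAut K) (a b : ContinuousMonoidHom K G'), homRel a b →
        Relation.EqvGen homRel (precompCMH a μ) (precompCMH b μ) :=
    fun μ a b h => Relation.EqvGen.rel _ _ (homRel_precomp μ a b h)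
  have hRact : ∀ (μ : contAut K) (a b : ContinuousMonoidHom K G × M), actRel a b →
      Relation.EqvGen actRel ((fun p (ν : contAut K) => (precompCMH p.1 ν, p.2)) a μ)
        ((fun p (ν : contAut K) => (precompCMH p.1 ν, p.2)) b μ) :=
    fun μ a b h => Relation.EqvGen.rel _ _ (actRel_precomp μ a b h)
  constructor
  · intro μ hμ
    have h1 : Relation.EqvGen homRel σx (precompCMH σx μ) :=
      (monOf_mem_iff_class precompCMH precompCMH_one precompCMH_mul
        (fun μ a b h => hRhom μ a b h) σx μ).mp hμ
    have h2 : Relation.EqvGen actRel ((extCMH σx, x) : ContinuousMonoidHom K G × M)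
        (extCMH (precompCMH σx μ), x) :=
      eqvGen_map_rel (fun φ => ((extCMH φ, x) : ContinuousMonoidHom K G × M))
        (fun a b h => homRel_ext x a b h) h1
    have e1 : (extCMH σx : ContinuousMonoidHom K G) = σ := by ext k; exact hσx k
    have e2 : (extCMH (precompCMH σx μ) : ContinuousMonoidHom K G) = precompCMH σ μ := by
      ext k; exact hσx ((μ : MulAut K) k)
    rw [e1, e2] at h2
    exact (monOf_mem_iff_class (fun p (ν : contAut K) => (precompCMH p.1 ν, p.2))
      (fun p => by simp [precompCMH_one]) (fun p μ ν => by simp [precompCMH_mul])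
      hRact ((σ, x) : ContinuousMonoidHom K G × M) μ).mpr h2
  · intro μ hμ
    have h2 : Relation.EqvGen actRel ((σ, x) : ContinuousMonoidHom K G × M)
        (precompCMH σ μ, x) :=
      (monOf_mem_iff_class (fun p (ν : contAut K) => (precompCMH p.1 ν, p.2))
        (fun p => by simp [precompCMH_one]) (fun p μ ν => by simp [precompCMH_mul])
        hRact ((σ, x) : ContinuousMonoidHom K G × M) μ).mp hμ
    have h1 : Relation.EqvGen homRel σ (precompCMH σ μ) :=
      eqvGen_map_rel (Prod.fst : ContinuousMonoidHom K G × M → ContinuousMonoidHom K G)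
        (fun a b h => actRel_fst a b h) h2
    exact (monOf_mem_iff_class precompCMH precompCMH_one precompCMH_mul
      (fun μ a b h => hRhom μ a b h) σ μ).mpr h1

end Paper
end

section
/- Let G be a faithfully representable Lie group, K a compact Lie group, and ρ ∈ hom(K,G) an injective continuous homomorphism. Then the right action of Mon(G;ρ) on hom(K,G;ρ) by composition is free: if φ ∈ hom(K,G;ρ) and μ ∈ Mon(G;ρ) satisfy φ∘μ = φ, then μ = id_K. -/
open scoped Manifold

noncomputable section Paper

open NormedSpace in
theorem nss_aux {A : Type*} [NormedRing A] [NormedAlgebra ℝ A] [CompleteSpace A] :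
    ∃ U : Set A, IsOpen U ∧ (1 : A) ∈ U ∧ ∀ a : A, (∀ m : ℕ, a ^ m ∈ U) → a = 1 := by
  have hd : HasStrictFDerivAt (exp : A → A)
      ((ContinuousLinearEquiv.refl ℝ A : A ≃L[ℝ] A) : A →L[ℝ] A) 0 := by
    rw [ContinuousLinearEquiv.coe_refl]
    exact hasStrictFDerivAt_exp_zero (𝕂 := ℝ)
  set ph := hd.toOpenPartialHomeomorph (exp : A → A) with hph
  have h0 : (0 : A) ∈ ph.source := hd.mem_toOpenPartialHomeomorph_source
  have hco : ⇑ph = (exp : A → A) := hd.toOpenPartialHomeomorph_coe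
  obtain ⟨r, hr0, hball⟩ := Metric.isOpen_iff.mp ph.open_source 0 h0
  have hhalf : Metric.ball (0 : A) (r / 2) ⊆ ph.source :=
    (Metric.ball_subset_ball (by linarith)).trans hball
  refine ⟨ph '' Metric.ball 0 (r / 2), ?_, ?_, ?_⟩
  · exact ph.isOpen_image_of_subset_source Metric.isOpen_ball hhalf
  · refine ⟨0, Metric.mem_ball_self (by linarith), ?_⟩
    rw [hco, exp_zero]
  · intro a ha
    obtain ⟨X, hX, hXa⟩ := by simpa using ha 1
    rw [hco] at hXa
    by_cases hX0 : X = 0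
    · rw [← hXa, hX0, exp_zero]
    have hXn : 0 < ‖X‖ := norm_pos_iff.mpr hX0
    have hXr : ‖X‖ < r / 2 := by simpa [Metric.mem_ball] using hX
    have hex : ∃ m : ℕ, r / 2 ≤ (m + 1) * ‖X‖ := by
      obtain ⟨m, hm⟩ := Archimedean.arch (r / 2) hXn
      refine ⟨m, le_trans hm ?_⟩
      rw [nsmul_eq_mul]
      nlinarith
    classical
    have hn1 : r / 2 ≤ (Nat.find hex + 1) * ‖X‖ := Nat.find_spec hex
    have hn2 : (Nat.find hex : ℝ) * ‖X‖ < r / 2 := by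
      cases h : Nat.find hex with
      | zero => simpa using by linarith
      | succ k =>
        have hk := Nat.find_min hex (show k < Nat.find hex by rw [h]; exact k.lt_succ_self)
        push_neg at hk
        push_cast
        push_cast at hk
        linarith
    set n := Nat.find hex with hn
    have hnorm : ‖(n + 1) • X‖ = ((n : ℝ) + 1) * ‖X‖ := by
      rw [← Nat.cast_smul_eq_nsmul ℝ, norm_smul]
      push_cast
      rw [Real.norm_of_nonneg (by positivity)]
    have hmem : (n + 1) • X ∈ ph.source := by
      apply hball
      rw [Metric.mem_ball, dist_zero_right, hnorm]
      linarith
    obtain ⟨Y, hY, hYa⟩ := by simpa using ha (n + 1)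
    have hYmem : Y ∈ ph.source := hhalf (mem_ball_zero_iff.mpr hY)
    have hexp : ph ((n + 1) • X) = ph Y := by
      letI : NormedAlgebra ℚ A := NormedAlgebra.restrictScalars ℚ ℝ A
      rw [hco, exp_nsmul, hXa, ← hYa, hco]
    have hYX : (n + 1) • X = Y := ph.injOn hmem hYmem hexp
    have : ‖(n + 1) • X‖ < r / 2 := by
      rw [hYX]; exact hY
    rw [hnorm] at this
    push_cast at hn1
    linarith

theorem nss_matrix (n : ℕ) :
    ∃ U : Set (Matrix (Fin n) (Fin n) ℂ), IsOpen U ∧ 1 ∈ U ∧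
      ∀ a : Matrix (Fin n) (Fin n) ℂ, (∀ m : ℕ, a ^ m ∈ U) → a = 1 := by
  letI : NormedRing (Matrix (Fin n) (Fin n) ℂ) := Matrix.linftyOpNormedRing
  letI : NormedAlgebra ℝ (Matrix (Fin n) (Fin n) ℂ) := Matrix.linftyOpNormedAlgebra
  haveI : CompleteSpace (Matrix (Fin n) (Fin n) ℂ) :=
    (by infer_instance : CompleteSpace (Fin n → Fin n → ℂ))
  exact nss_aux

theorem joined_ker {K G : Type*} [TopologicalSpace K] [Group K] [IsTopologicalGroup K]
    [CompactSpace K] [TopologicalSpace G] [Group G] [IsTopologicalGroup G] [T2Space G]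
    {U : Set G} (hUo : IsOpen U) (hU1 : (1 : G) ∈ U)
    (hU : ∀ g : G, (∀ m : ℕ, g ^ m ∈ U) → g = 1)
    {φ ψ : ContinuousMonoidHom K G} (hJ : Joined φ ψ) {k : K} (hk : φ k = 1) : ψ k = 1 := by
  obtain ⟨γ⟩ := hJ
  set N : Set K := ⇑φ ⁻¹' {1} with hN
  have hNc : IsCompact N := (isClosed_singleton.preimage (map_continuous φ)).isCompact
  have hNpow : ∀ x ∈ N, ∀ m : ℕ, x ^ m ∈ N := by
    intro x hx m
    simp only [hN, Set.mem_preimage, Set.mem_singleton_iff] at hx ⊢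
    rw [map_pow, hx, one_pow]
  have hcont : Continuous fun t : unitInterval => ((γ t : ContinuousMonoidHom K G) : C(K, G)) :=
    (ContinuousMonoidHom.isInducing_toContinuousMap K G).continuous.comp γ.continuous
  have hSV : {t : unitInterval | ∀ x ∈ N, (γ t) x = 1}
      = (fun t => ((γ t : ContinuousMonoidHom K G) : C(K, G))) ⁻¹'
        {f : C(K, G) | Set.MapsTo f N U} := by
    ext t
    constructor
    · intro ht x hx
      show ((γ t : ContinuousMonoidHom K G) : C(K, G)) x ∈ U
      have h1 : (γ t) x = 1 := ht x hx
      show (γ t) x ∈ U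
      rw [h1]; exact hU1
    · intro ht x hx
      refine hU _ fun m => ?_
      rw [← map_pow]
      exact ht (hNpow x hx m)
  have hSo : IsOpen {t : unitInterval | ∀ x ∈ N, (γ t) x = 1} := by
    rw [hSV]
    exact (ContinuousMap.isOpen_setOf_mapsTo hNc hUo).preimage hcont
  have hSc : IsClosed {t : unitInterval | ∀ x ∈ N, (γ t) x = 1} := by
    have he : {t : unitInterval | ∀ x ∈ N, (γ t) x = 1} = ⋂ x ∈ N, {t | (γ t) x = 1} := by
      ext t; simp
    rw [he]
    refine isClosed_biInter fun x hx => isClosed_eq ?_ continuous_const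
    exact (continuous_eval_const x).comp γ.continuous
  have huniv : {t : unitInterval | ∀ x ∈ N, (γ t) x = 1} = Set.univ := by
    refine IsClopen.eq_univ ⟨hSc, hSo⟩ ⟨0, fun x hx => ?_⟩
    rw [γ.source]
    exact hx
  have h1 : (1 : unitInterval) ∈ {t : unitInterval | ∀ x ∈ N, (γ t) x = 1} := by
    rw [huniv]; exact Set.mem_univ _
  have := h1 k hk
  rwa [γ.target] at this

theorem homClass_ker {K G : Type*} [TopologicalSpace K] [Group K] [IsTopologicalGroup K]
    [CompactSpace K] [TopologicalSpace G] [Group G] [IsTopologicalGroup G] [T2Space G]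
    {U : Set G} (hUo : IsOpen U) (hU1 : (1 : G) ∈ U)
    (hU : ∀ g : G, (∀ m : ℕ, g ^ m ∈ U) → g = 1)
    {ρ φ : ContinuousMonoidHom K G} (hφ : φ ∈ homClass ρ) :
    ∀ x, ρ x = 1 ↔ φ x = 1 := by
  have hφ' : Relation.EqvGen homRel ρ φ := hφ
  clear hφ
  induction hφ' with
  | rel a b h =>
    rcases h with hJ | ⟨g, rfl⟩
    · exact fun x => ⟨fun hx => joined_ker hUo hU1 hU hJ hx,
        fun hx => joined_ker hUo hU1 hU hJ.symm hx⟩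
    · intro x
      show a x = 1 ↔ g * a x * g⁻¹ = 1
      exact (conj_eq_one_iff).symm
  | refl a => exact fun x => Iff.rfl
  | symm a b h ih => exact fun x => (ih x).symm
  | trans a b c h1 h2 ih1 ih2 => exact fun x => (ih1 x).trans (ih2 x)

/-- the action of the monodromy group on `hom(K,G;ρ)` is free. -/
theorem Mon_action_free {dK : ℕ} {K : Type*} [TopologicalSpace K] [T2Space K]
    [ChartedSpace (EuclideanSpace ℝ (Fin dK)) K] [Group K] [IsTopologicalGroup K]
    [LieGroup (𝓡 dK) (⊤ : ℕ∞) K] [CompactSpace K]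
    {dG : ℕ} {G : Type*} [TopologicalSpace G] [T2Space G]
    [ChartedSpace (EuclideanSpace ℝ (Fin dG)) G] [Group G] [IsTopologicalGroup G]
    [LieGroup (𝓡 dG) (⊤ : ℕ∞) G]
    (hG : FaithfullyRepresentable G)
    (ρ : ContinuousMonoidHom K G) (hρ : Function.Injective ρ)
    (φ : ContinuousMonoidHom K G) (hφ : φ ∈ homClass ρ)
    (μ : contAut K) (hμ : μ ∈ Mon ρ) (h : precompCMH φ μ = φ) :
    μ = 1 := by
  obtain ⟨n, r, hrc, hri⟩ := hG
  obtain ⟨U, hUo, hU1, hU⟩ := nss_matrix n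
  set j : G → Matrix (Fin n) (Fin n) ℂ := fun g => ↑(r g) with hj
  have hjc : Continuous j := Units.continuous_val.comp hrc
  have hVo : IsOpen (j ⁻¹' U) := hUo.preimage hjc
  have hV1 : (1 : G) ∈ j ⁻¹' U := by
    show ((r 1 : Matrix.GeneralLinearGroup (Fin n) ℂ) : Matrix (Fin n) (Fin n) ℂ) ∈ U
    rw [map_one]
    exact hU1
  have hV : ∀ g : G, (∀ m : ℕ, g ^ m ∈ j ⁻¹' U) → g = 1 := by
    intro g hg
    have hj1 : j g = 1 := by
      refine hU _ fun m => ?_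
      have := hg m
      have hpow : j (g ^ m) = (j g) ^ m := by
        show ((r (g ^ m) : Matrix.GeneralLinearGroup (Fin n) ℂ) : Matrix (Fin n) (Fin n) ℂ)
          = ((r g : Matrix.GeneralLinearGroup (Fin n) ℂ) : Matrix (Fin n) (Fin n) ℂ) ^ m
        rw [map_pow, Units.val_pow_eq_pow_val]
      rw [← hpow]
      exact this
    apply hri
    rw [map_one]
    exact Units.ext (hj1.trans Units.val_one.symm)
  have hker := homClass_ker hVo hV1 hV hφ
  have hinj : ∀ x : K, φ x = 1 → x = 1 := by
    intro x hx
    have : ρ x = 1 := (hker x).mpr hx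
    exact hρ (this.trans (map_one ρ).symm)
  have key : ∀ x : K, (μ : MulAut K) x = x := by
    intro x
    have hx : φ ((μ : MulAut K) x) = φ x := DFunLike.congr_fun h x
    have h1 : φ ((μ : MulAut K) x * x⁻¹) = 1 := by
      rw [map_mul, map_inv, hx, mul_inv_cancel]
    exact mul_inv_eq_one.mp (hinj _ h1)
  exact Subtype.ext (DFunLike.ext _ _ key)


end Paper
end
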